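/- arXiv:1512.02378 — 7 statements merged into one kernel-verified Lean document; each statement's English description precedes it below -/
import Mathlib

section
/- Let m_1 < m_2 < … < m_j be positive integers with j ≥ 2, and let m be a positive integer lying in the numerical semigroup generated by m_1, …, m_j. Then there exist nonnegative integers α, β, γ such that m = γ·m_j − β·m_2 − α·m_1 with α < m_j and β < m_j. Moreover, if j = 2, then β can be taken to be 0. -/
private lemma key_compl (n a : ℕ) (hn : 0 < n) : ∃ α q, a + α = q * n ∧ α < n := by
  by_cases h : a % n = 0
  · exact ⟨0, a / n, by
      rw [Nat.add_zero, Nat.div_mul_cancel (Nat.dvd_of_mod_eq_zero h)], hn⟩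
  · have h1 : a % n < n := Nat.mod_lt _ hn
    refine ⟨n - a % n, a / n + 1, ?_, by omega⟩
    have h2 := Nat.div_add_mod a n
    have h3 : (a / n + 1) * n = n * (a / n) + n := by ring
    omega

private lemma key_comb (S : Finset ℕ) (f g u v w : ℕ → ℕ) (x y z : ℕ)
    (h : ∀ k ∈ S, g k = u k * x + v k * y + w k * z) :
    ∃ a b c, ∑ k ∈ S, f k * g k = a * x + b * y + c * z := by
  refine ⟨∑ k ∈ S, f k * u k, ∑ k ∈ S, f k * v k, ∑ k ∈ S, f k * w k, ?_⟩
  rw [Finset.sum_mul, Finset.sum_mul, Finset.sum_mul, ← Finset.sum_add_distrib,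
    ← Finset.sum_add_distrib]
  exact Finset.sum_congr rfl fun k hk => by rw [h k hk]; ring

/-- Lemma 1, part (II), of the paper, for a recursive extension: if
`m 1 < m 2 < … < m j` are positive integers (`j ≥ 2`) with each `m i`
(`3 ≤ i ≤ j`) in the numerical semigroup generated by `m 1, …, m (i-1)`,
and `M` is a positive integer in the numerical semigroup generated by
`m 1, …, m j`, then `M = γ * m j - β * m 2 - α * m 1` (written additively)
with `α, β < m j`; moreover if `j = 2` one can take `β = 0`. -/
theorem stmt_1 (j : ℕ) (hj : 2 ≤ j) (m : ℕ → ℕ)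
    (hpos : ∀ i, 1 ≤ i → i ≤ j → 0 < m i)
    (hmono : ∀ i, 1 ≤ i → i < j → m i < m (i + 1))
    (hrec : ∀ i, 3 ≤ i → i ≤ j →
      ∃ A : ℕ → ℕ, m i = ∑ k ∈ Finset.Icc 1 (i - 1), A k * m k)
    (M : ℕ) (hM : 0 < M)
    (hmem : ∃ A : ℕ → ℕ, M = ∑ k ∈ Finset.Icc 1 j, A k * m k) :
    (∃ α β γ : ℕ, M + β * m 2 + α * m 1 = γ * m j ∧ α < m j ∧ β < m j) ∧
      (j = 2 → ∃ α γ : ℕ, M + α * m 1 = γ * m 2 ∧ α < m 2) := by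
  -- every m i, 1 ≤ i ≤ j, is a combination of m 1, m 2, m j
  have aux : ∀ i, 1 ≤ i → i ≤ j →
      ∃ a b c : ℕ, m i = a * m 1 + b * m 2 + c * m j := by
    intro i
    induction i using Nat.strong_induction_on with
    | _ i ih =>
      intro h1 h2
      by_cases hij : i = j
      · exact ⟨0, 0, 1, by simp [hij]⟩
      by_cases hi1 : i = 1
      · exact ⟨1, 0, 0, by simp [hi1]⟩
      by_cases hi2 : i = 2
      · exact ⟨0, 1, 0, by simp [hi2]⟩
      obtain ⟨A, hA⟩ := hrec i (by omega) h2
      have hch : ∀ k, ∃ a b c : ℕ,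
          k ∈ Finset.Icc 1 (i - 1) → m k = a * m 1 + b * m 2 + c * m j := by
        intro k
        by_cases hk : k ∈ Finset.Icc 1 (i - 1)
        · rw [Finset.mem_Icc] at hk
          obtain ⟨a, b, c, h⟩ := ih k (by omega) hk.1 (by omega)
          exact ⟨a, b, c, fun _ => h⟩
        · exact ⟨0, 0, 0, fun h => absurd h hk⟩
      choose u v w hu using hch
      obtain ⟨a, b, c, h⟩ := key_comb (Finset.Icc 1 (i - 1)) A m u v w
        (m 1) (m 2) (m j) (fun k hk => hu k hk)
      exact ⟨a, b, c, by rw [hA, h]⟩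
  obtain ⟨A, hA⟩ := hmem
  have hch : ∀ k, ∃ a b c : ℕ,
      k ∈ Finset.Icc 1 j → m k = a * m 1 + b * m 2 + c * m j := by
    intro k
    by_cases hk : k ∈ Finset.Icc 1 j
    · rw [Finset.mem_Icc] at hk
      obtain ⟨a, b, c, h⟩ := aux k hk.1 hk.2
      exact ⟨a, b, c, fun _ => h⟩
    · exact ⟨0, 0, 0, fun h => absurd h hk⟩
  choose u v w hu using hch
  obtain ⟨a, b, c, hM'⟩ := key_comb (Finset.Icc 1 j) A m u v w
    (m 1) (m 2) (m j) (fun k hk => hu k hk)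
  rw [← hA] at hM'
  have hmj : 0 < m j := hpos j (by omega) le_rfl
  constructor
  · obtain ⟨α, q, hq, hαlt⟩ := key_compl (m j) a hmj
    obtain ⟨β, p, hp, hβlt⟩ := key_compl (m j) b hmj
    refine ⟨α, β, q * m 1 + p * m 2 + c, ?_, hαlt, hβlt⟩
    calc M + β * m 2 + α * m 1
        = (a + α) * m 1 + (b + β) * m 2 + c * m j := by rw [hM']; ring
      _ = (q * m j) * m 1 + (p * m j) * m 2 + c * m j := by rw [hq, hp]
      _ = (q * m 1 + p * m 2 + c) * m j := by ring
  · intro hj2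
    subst hj2
    have hm2 : 0 < m 2 := hpos 2 (by omega) le_rfl
    obtain ⟨α, q, hq, hαlt⟩ := key_compl (m 2) a hm2
    refine ⟨α, q * m 1 + b + c, ?_, hαlt⟩
    calc M + α * m 1 = (a + α) * m 1 + (b + c) * m 2 := by rw [hM']; ring
      _ = (q * m 2) * m 1 + (b + c) * m 2 := by rw [hq]
      _ = (q * m 1 + b + c) * m 2 := by ring
end

section
/- Let m_1 < m_2 < m' be positive integers and let a, b, c be nonnegative integers with a < m', b < m', and m := c·m' + b·m_2 + a·m_1. Define α = 0 if a = 0 and α = m' − a if a > 0; define β = 0 if b = 0 and β = m' − b if b > 0; define γ = c if a = 0 and b = 0, γ = c + m_2 if a = 0 and b > 0, γ = c + m_1 if a > 0 and b = 0, and γ = c + m_2 + m_1 if a > 0 and b > 0. Assume γ − β − α − 1 ≥ 0. Then for every integer k with m' − m_1 + 1 ≤ k ≤ m', one has h_0(k) := k·(a + b + c − 1) − b·(m' − m_2) − a·(m' − m_1) ≥ 0. -/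
/-- From the proof of Lemma 2 of the paper: the exponents
`h₀(k) = k(a+b+c-1) - b(m'-m₂) - a(m'-m₁)` of `x₀` appearing in `H_{i-1}` are
nonnegative for `m' - m₁ + 1 ≤ k ≤ m'`, where `α, β, γ` are obtained from
`a, b, c` by the formulas of Lemma 1 and `γ - β - α - 1 ≥ 0`. -/
theorem stmt_4 (m1 m2 m' a b c : ℕ) (h1 : 0 < m1) (h12 : m1 < m2) (h2 : m2 < m')
    (ha : a < m') (hb : b < m') (m : ℕ) (hm : m = c * m' + b * m2 + a * m1)
    (α β γ : ℕ)
    (hα : α = if a = 0 then 0 else m' - a)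
    (hβ : β = if b = 0 then 0 else m' - b)
    (hγ : γ = if a = 0 then (if b = 0 then c else c + m2)
              else (if b = 0 then c + m1 else c + m2 + m1))
    (hγβα : β + α + 1 ≤ γ) :
    ∀ k : ℕ, m' - m1 + 1 ≤ k → k ≤ m' →
      0 ≤ (k : ℤ) * ((a : ℤ) + (b : ℤ) + (c : ℤ) - 1) -
          (b : ℤ) * ((m' : ℤ) - (m2 : ℤ)) - (a : ℤ) * ((m' : ℤ) - (m1 : ℤ)) := by
  intro k hk1 hk2
  subst hα hβ hγ
  clear hm
  have hk1' : (m' : ℤ) - (m1 : ℤ) + 1 ≤ (k : ℤ) := by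
    zify [show m1 ≤ m' from by omega] at hk1; linarith
  have hk2' : (k : ℤ) ≤ (m' : ℤ) := by exact_mod_cast hk2
  have hm12 : (m1 : ℤ) < (m2 : ℤ) := by exact_mod_cast h12
  have hm2' : (m2 : ℤ) < (m' : ℤ) := by exact_mod_cast h2
  have ha' : (a : ℤ) < (m' : ℤ) := by exact_mod_cast ha
  have hb' : (b : ℤ) < (m' : ℤ) := by exact_mod_cast hb
  have ha0 : (0 : ℤ) ≤ a := Int.ofNat_nonneg a
  have hb0 : (0 : ℤ) ≤ b := Int.ofNat_nonneg b
  have hk0 : (0 : ℤ) ≤ k := Int.ofNat_nonneg k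
  have hs : (1 : ℤ) ≤ (k : ℤ) - (m' : ℤ) + (m1 : ℤ) := by linarith
  have ht : (1 : ℤ) ≤ (k : ℤ) - (m' : ℤ) + (m2 : ℤ) := by linarith
  rcases Nat.eq_zero_or_pos c with hc | hc
  · subst hc
    rcases Nat.eq_zero_or_pos a with haz | hap
    · subst haz
      rcases Nat.eq_zero_or_pos b with hbz | hbp
      · subst hbz; simp at hγβα
      · -- a = 0, b > 0, c = 0 : (m'-b)+1 ≤ m2
        have hbne := Nat.pos_iff_ne_zero.mp hbp
        simp [hbne] at hγβα
        have hnat : m' - m2 + 1 ≤ b := by omega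
        have hB : (m' : ℤ) - (m2 : ℤ) + 1 ≤ (b : ℤ) := by
          zify [show m2 ≤ m' from by omega] at hnat; linarith
        clear hγβα hnat
        push_cast
        linarith [mul_nonneg (by linarith : (0:ℤ) ≤ (b:ℤ) - ((m':ℤ) - (m2:ℤ) + 1))
            (by linarith : (0:ℤ) ≤ (k:ℤ) - (m':ℤ) + (m2:ℤ)),
          mul_nonneg (by linarith : (0:ℤ) ≤ (m':ℤ) - (m2:ℤ))
            (by linarith : (0:ℤ) ≤ (k:ℤ) - (m':ℤ) + (m2:ℤ) - 1)]
    · rcases Nat.eq_zero_or_pos b with hbz | hbp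
      · subst hbz
        have hane := Nat.pos_iff_ne_zero.mp hap
        simp [hane] at hγβα
        have hnat : m' - m1 + 1 ≤ a := by omega
        have hA : (m' : ℤ) - (m1 : ℤ) + 1 ≤ (a : ℤ) := by
          zify [show m1 ≤ m' from by omega] at hnat; linarith
        clear hγβα hnat
        push_cast
        linarith [mul_nonneg (by linarith : (0:ℤ) ≤ (a:ℤ) - ((m':ℤ) - (m1:ℤ) + 1))
            (by linarith : (0:ℤ) ≤ (k:ℤ) - (m':ℤ) + (m1:ℤ)),
          mul_nonneg (by linarith : (0:ℤ) ≤ (m':ℤ) - (m1:ℤ))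
            (by linarith : (0:ℤ) ≤ (k:ℤ) - (m':ℤ) + (m1:ℤ) - 1)]
      · have hane := Nat.pos_iff_ne_zero.mp hap
        have hbne := Nat.pos_iff_ne_zero.mp hbp
        simp [hane, hbne] at hγβα
        -- (m'-b) + (m'-a) + 1 ≤ m2 + m1
        have h' : 2 * m' + 1 ≤ m2 + m1 + a + b := by omega
        have hAB : 2 * (m' : ℤ) - (m1 : ℤ) - (m2 : ℤ) + 1 ≤ (a : ℤ) + (b : ℤ) := by
          zify at h'; linarith
        clear hγβα h'
        push_cast
        have hb1 : (1:ℤ) ≤ (b:ℤ) := by exact_mod_cast hbp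
        linarith [mul_nonneg (by linarith : (0:ℤ) ≤ (a:ℤ) + (b:ℤ) - 1 - ((m':ℤ) - (m1:ℤ)))
            (by linarith : (0:ℤ) ≤ (k:ℤ) - (m':ℤ) + (m1:ℤ) - 1),
          mul_nonneg (by linarith : (0:ℤ) ≤ (b:ℤ) - 1) (by linarith : (0:ℤ) ≤ (m2:ℤ) - (m1:ℤ)),
          mul_nonneg (by linarith : (0:ℤ) ≤ (m':ℤ) - (m1:ℤ))
            (by linarith : (0:ℤ) ≤ (k:ℤ) - (m':ℤ) + (m1:ℤ) - 1)]
  · have hc' : (1 : ℤ) ≤ (c : ℤ) := by exact_mod_cast hc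
    clear hγβα
    linarith [mul_nonneg ha0 (by linarith : (0:ℤ) ≤ (k:ℤ) - (m':ℤ) + (m1:ℤ)),
      mul_nonneg hb0 (by linarith : (0:ℤ) ≤ (k:ℤ) - (m':ℤ) + (m2:ℤ)),
      mul_nonneg hk0 (by linarith : (0:ℤ) ≤ (c:ℤ) - 1)]
end

section
/- Let K be a commutative ring, let m_1 < m_2 < … < m_n be positive integers, fix 3 ≤ i ≤ n, and let a, b, c, α, β, γ be nonnegative integers with m_i = c·m_{i−1} + b·m_2 + a·m_1 = γ·m_{i−1} − β·m_2 − α·m_1, γ − β − α − 1 ≥ 0, and m_1 ≥ β·(m_2 − m_1). Then for all t, y ∈ K, substituting x_0 = 1, x_j = t^{m_j} for 1 ≤ j ≤ i − 1, and x_i = y into F_{i−1} yields (t^{m_i} − y)^{m_{i−1}}. -/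
/-- The polynomial `F_{i-1} = x_{i-1}^{m_i} + G_{i-1} + H_{i-1}` of Lemma 2 of the
paper, with coefficients in a commutative ring `K`, in variables `x_j` indexed by
`j : ℕ` (only `x_0, x_1, x_2, x_{i-1}, x_i` occur). -/
noncomputable def Fpoly (K : Type*) [CommRing K] (m : ℕ → ℕ)
    (i a b c α β γ : ℕ) : MvPolynomial ℕ K :=
  MvPolynomial.X (i - 1) ^ m i
    + ∑ k ∈ Finset.Icc 1 (m (i - 1) - m 1),
        MvPolynomial.C ((-1 : K) ^ k * ((m (i - 1)).choose k : K)) *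
          (MvPolynomial.X 1 ^ (k * α) * MvPolynomial.X 2 ^ (k * β) *
            MvPolynomial.X (i - 1) ^ (m i - k * γ) * MvPolynomial.X i ^ k *
            MvPolynomial.X 0 ^ (k * (γ - β - α - 1)))
    + ∑ k ∈ Finset.Icc (m (i - 1) - m 1 + 1) (m (i - 1)),
        MvPolynomial.C ((-1 : K) ^ k * ((m (i - 1)).choose k : K)) *
          (MvPolynomial.X 1 ^ (a * (m (i - 1) - k)) *
            MvPolynomial.X 2 ^ (b * (m (i - 1) - k)) *
            MvPolynomial.X (i - 1) ^ (c * (m (i - 1) - k)) * MvPolynomial.X i ^ k *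
            MvPolynomial.X 0 ^
              (k * (a + b + c - 1) - b * (m (i - 1) - m 2) - a * (m (i - 1) - m 1)))

open Finset in
lemma my_sub_pow {K : Type*} [CommRing K] (x y : K) (M : ℕ) :
    (x - y)^M = ∑ k ∈ range (M+1), (-1 : K)^k * (M.choose k : K) * (x^(M-k) * y^k) := by
  rw [sub_eq_add_neg, add_comm, add_pow]
  refine Finset.sum_congr rfl fun k hk => ?_
  rw [neg_pow]; ring

open Finset in
/-- The key computation in the proof of Theorem 1 of the paper: substituting
`x_0 = 1`, `x_j = t^{m_j}` for `1 ≤ j ≤ i-1` and `x_i = y` into `F_{i-1}` yields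
`(t^{m_i} - y)^{m_{i-1}}`. -/
theorem stmt_8 {K : Type*} [CommRing K] (n i : ℕ) (hi : 3 ≤ i) (hin : i ≤ n)
    (m : ℕ → ℕ)
    (hpos : ∀ j, 1 ≤ j → j ≤ n → 0 < m j)
    (hmono : ∀ j, 1 ≤ j → j < n → m j < m (j + 1))
    (a b c α β γ : ℕ)
    (heq1 : m i = c * m (i - 1) + b * m 2 + a * m 1)
    (heq2 : m i + β * m 2 + α * m 1 = γ * m (i - 1))
    (hγ : β + α + 1 ≤ γ) (hβ : β * (m 2 - m 1) ≤ m 1) :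
    ∀ t y : K,
      MvPolynomial.eval
        (fun j => if j = 0 then 1 else if j ≤ i - 1 then t ^ m j else y)
        (Fpoly K m i a b c α β γ) = (t ^ m i - y) ^ m (i - 1) := by
  unfold Fpoly
  intro t y
  -- monotonicity on [1, n]
  have hmle : ∀ j j', 1 ≤ j → j ≤ j' → j' ≤ n → m j ≤ m j' := by
    intro j j' h1 hjj' hj'n
    induction j' , hjj' using Nat.le_induction with
    | base => exact le_rfl
    | succ j'' hle ih =>
      exact le_trans (ih (by omega)) (le_of_lt (hmono j'' (by omega) (by omega)))
  have h12 : m 1 ≤ m 2 := hmle 1 2 le_rfl (by omega) (by omega)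
  have h2i : m 2 ≤ m (i-1) := hmle 2 (i-1) (by omega) (by omega) (by omega)
  have h1M : m 1 ≤ m (i-1) := le_trans h12 h2i
  set M := m (i-1) with hM
  set N := M - m 1 with hN
  have hNM : N ≤ M := Nat.sub_le _ _
  -- key bound: for k ≤ N, k*γ ≤ m i
  have hkey : ∀ k, k ≤ N → k * γ ≤ m i := by
    intro k hk
    have hb2 : β * m 2 = β * (m 2 - m 1) + β * m 1 := by
      rw [← Nat.mul_add, Nat.sub_add_cancel h12]
    have hb : β * m 2 ≤ β * m 1 + m 1 := by omega
    have hgm : (β + α + 1) * m 1 ≤ γ * m 1 := Nat.mul_le_mul_right _ hγ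
    have h1 : β * m 2 + α * m 1 ≤ γ * m 1 := by nlinarith
    have hkN : k * γ ≤ N * γ := Nat.mul_le_mul_right _ hk
    have h2 : k * γ + β * m 2 + α * m 1 ≤ γ * M := by
      calc k * γ + β * m 2 + α * m 1 ≤ N * γ + γ * m 1 := by omega
        _ = (M - m 1) * γ + m 1 * γ := by rw [hN]; ring
        _ = M * γ := by rw [← Nat.add_mul, Nat.sub_add_cancel h1M]
        _ = γ * M := Nat.mul_comm _ _
    omega
  have c1 : (1:ℕ) ≤ i - 1 := by omega
  have c2 : (2:ℕ) ≤ i - 1 := by omega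
  have c3 : ¬ (i - 1 = 0) := by omega
  have c4 : ¬ (i ≤ i - 1) := by omega
  have c5 : ¬ ((1:ℕ) = 0) := by omega
  have c6 : ¬ ((2:ℕ) = 0) := by omega
  have c7 : ¬ (i = 0) := by omega
  simp only [map_add, map_sum, map_mul, map_pow, MvPolynomial.eval_X, MvPolynomial.eval_C,
    ↓reduceIte, if_neg c5, if_neg c6, if_neg c7, if_pos c1, if_pos c2, if_neg c3, if_neg c4, le_refl, if_true]
  rw [my_sub_pow]
  -- split RHS sum
  have hsplit : range (M + 1) = insert 0 (Ioc 0 M) := by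
    ext x; simp [Nat.lt_succ_iff]
  rw [hsplit, Finset.sum_insert (by simp)]
  rw [← Finset.sum_Ioc_consecutive _ (Nat.zero_le N) hNM]
  have hIcc1 : Finset.Icc 1 N = Finset.Ioc 0 N := rfl
  have hIcc2 : Finset.Icc (N+1) M = Finset.Ioc N M := by
    ext x; simp
  rw [hIcc1, hIcc2]
  have hterm0 : (t ^ M) ^ m i = (-1:K)^0 * ((M.choose 0 : K)) * ((t ^ m i)^(M - 0) * y ^ 0) := by
    simp [← pow_mul, Nat.mul_comm]
  rw [hterm0, add_assoc]
  refine congrArg₂ (· + ·) rfl (congrArg₂ (· + ·) ?_ ?_)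
  · refine Finset.sum_congr rfl fun k hk => ?_
    simp only [Finset.mem_Ioc] at hk
    rw [one_pow, mul_one, ← pow_mul, ← pow_mul, ← pow_mul, ← pow_mul, ← pow_add, ← pow_add]
    have hkγ : k * γ ≤ m i := hkey k hk.2
    have hexp : m 1 * (k * α) + m 2 * (k * β) + m (i - 1) * (m i - k * γ) = m i * (M - k) := by
      rw [← hM]
      have hkM : k ≤ M := le_trans hk.2 hNM
      zify [hkγ, hkM]
      have h2 : (m i : ℤ) + β * m 2 + α * m 1 = γ * M := by exact_mod_cast heq2
      linear_combination (k : ℤ) * h2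
    rw [hexp]
  · refine Finset.sum_congr rfl fun k hk => ?_
    simp only [Finset.mem_Ioc] at hk
    rw [one_pow, mul_one, ← pow_mul, ← pow_mul, ← pow_mul, ← pow_add, ← pow_add]
    have hexp : m 1 * (a * (M - k)) + m 2 * (b * (M - k)) + m (i - 1) * (c * (M - k)) = m i * (M - k) := by
      rw [heq1, hM]; ring
    rw [hexp, pow_mul]
end

section
/- Let K be a field and let m_1 < m_2 be coprime positive integers. If x_0 = 0 and x_1^{m_2} − x_2^{m_1} x_0^{m_2 − m_1} = 0, then x_1 = 0. More generally, in the setting of the paper's Theorem 1 (with polynomials F_1, …, F_{n−1} as defined there), if (0, x_1, …, x_n) ∈ K^{n+1} is a common zero of F_1, …, F_{n−1}, then x_1 = x_2 = … = x_{n−1} = 0; that is, the only common zeros with x_0 = 0 are the scalar multiples of the point (0, …, 0, 1). -/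
/-- The case `x_0 = 0` in the proof of Theorem 1 of the paper: a common zero
`(0, x_1, …, x_n)` of `F_1 = x_1^{m_2} - x_2^{m_1} x_0^{m_2-m_1}` and
`F_2, …, F_{n-1}` has `x_1 = x_2 = ⋯ = x_{n-1} = 0`; in particular `x_0 = 0`
and `F_1 = 0` already force `x_1 = 0`. -/
theorem stmt_9 {K : Type*} [Field K] (n : ℕ) (hn : 3 ≤ n)
    (m a b c α β γ : ℕ → ℕ)
    (hpos : ∀ i, 1 ≤ i → i ≤ n → 0 < m i)
    (hmono : ∀ i, 1 ≤ i → i < n → m i < m (i + 1))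
    (hgcd : Finset.gcd (Finset.Icc 1 n) m = 1)
    (hrep : ∀ i, 3 ≤ i → i ≤ n →
      m i = c i * m (i - 1) + b i * m 2 + a i * m 1 ∧
      m i + β i * m 2 + α i * m 1 = γ i * m (i - 1) ∧
      a i < m (i - 1) ∧ b i < m (i - 1) ∧ α i < m (i - 1) ∧ β i < m (i - 1) ∧
      β i + α i + 1 ≤ γ i ∧ β i * (m 2 - m 1) ≤ m 1 ∧
      α i = (if a i = 0 then 0 else m (i - 1) - a i) ∧
      β i = (if b i = 0 then 0 else m (i - 1) - b i))
    (hb3 : b 3 = 0) (hβ3 : β 3 = 0)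
    (x : ℕ → K) (hx0 : x 0 = 0)
    (hF1 : x 1 ^ m 2 - x 2 ^ m 1 * x 0 ^ (m 2 - m 1) = 0)
    (hFi : ∀ i, 3 ≤ i → i ≤ n →
      MvPolynomial.eval x (Fpoly K m i (a i) (b i) (c i) (α i) (β i) (γ i)) = 0) :
    ∀ j, 1 ≤ j → j ≤ n - 1 → x j = 0 := by
  -- basic facts
  have hmle : ∀ p q, 1 ≤ p → p ≤ q → q ≤ n → m p ≤ m q := by
    intro p q hp hpq hq
    induction q with
    | zero => omega
    | succ q ih =>
      rcases Nat.eq_or_lt_of_le hpq with h | h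
      · rw [h]
      · have h1 : m p ≤ m q := ih (by omega) (by omega)
        have h2 : m q < m (q + 1) := hmono q (by omega) (by omega)
        omega
  have hm12 : m 1 < m 2 := hmono 1 le_rfl (by omega)
  have hm1 : 0 < m 1 := hpos 1 le_rfl (by omega)
  have hx1 : x 1 = 0 := by
    rw [hx0, zero_pow (by omega), mul_zero, sub_zero] at hF1
    exact pow_eq_zero_iff (by omega) |>.mp hF1
  have two_le : ∀ C M mi : ℕ, mi = C * M → M < mi → 2 ≤ C := by
    intro C M mi h1 h2
    rcases C with _ | _ | C <;> simp_all <;> omega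
  have key : ∀ i, 3 ≤ i → i ≤ n → (x 2 = 0 ∨ i = 3) → x (i - 1) = 0 := by
    intro i h3 hin hx2
    obtain ⟨h1, h2, ha, hb, hα, hβ, hγ, hβm, hαdef, hβdef⟩ := hrep i h3 hin
    have hM0 : 0 < m (i - 1) := hpos (i - 1) (by omega) (by omega)
    have hmi : m (i - 1) < m i := by
      have := hmono (i - 1) (by omega) (by omega)
      rwa [show i - 1 + 1 = i by omega] at this
    have hm2M : m 2 ≤ m (i - 1) := hmle 2 (i - 1) (by omega) (by omega) (by omega)
    have hm1M : m 1 ≤ m (i - 1) := hmle 1 (i - 1) (by omega) (by omega) (by omega)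
    -- a = 0 iff α = 0, b = 0 iff β = 0
    have haα : a i = 0 ↔ α i = 0 := by
      constructor
      · intro h; simp [h] at hαdef; exact hαdef
      · intro h; by_contra hne; rw [if_neg hne] at hαdef; omega
    have hbβ : b i = 0 ↔ β i = 0 := by
      constructor
      · intro h; simp [h] at hβdef; exact hβdef
      · intro h; by_contra hne; rw [if_neg hne] at hβdef; omega
    -- x 2 vanishes whenever b i ≠ 0
    have hx2' : b i ≠ 0 → x 2 = 0 := by
      intro hbne
      rcases hx2 with h | h
      · exact h
      · subst h; exact absurd hb3 hbne
    have hF := hFi i h3 hin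
    unfold Fpoly at hF
    simp only [map_add, map_sum, map_mul, map_pow, MvPolynomial.eval_X,
      MvPolynomial.eval_C] at hF
    have hz1 : ∀ k ∈ Finset.Icc 1 (m (i - 1) - m 1),
        (-1 : K) ^ k * ((m (i - 1)).choose k : K) *
          (x 1 ^ (k * α i) * x 2 ^ (k * β i) * x (i - 1) ^ (m i - k * γ i) * x i ^ k *
            x 0 ^ (k * (γ i - β i - α i - 1))) = 0 := by
      intro k hk
      simp only [Finset.mem_Icc] at hk
      rcases Nat.eq_zero_or_pos (α i) with hα0 | hα0
      swap
      · rw [hx1, zero_pow (Nat.mul_ne_zero (by omega) (by omega))]; ring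
      rcases Nat.eq_zero_or_pos (β i) with hβ0 | hβ0
      swap
      · rw [hx2' (by omega), zero_pow (Nat.mul_ne_zero (by omega) (by omega))]; ring
      -- α = β = 0, so a = b = 0, so m i = γ i * m (i-1), γ i ≥ 2
      have hγ2 : 2 ≤ γ i := by
        refine two_le (γ i) (m (i - 1)) (m i) ?_ hmi
        rw [hα0, hβ0] at h2
        simpa using h2
      rw [hx0, zero_pow (Nat.mul_ne_zero (by omega) (by omega))]; ring
    have hz2 : ∀ k ∈ Finset.Icc (m (i - 1) - m 1 + 1) (m (i - 1)),
        (-1 : K) ^ k * ((m (i - 1)).choose k : K) *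
          (x 1 ^ (a i * (m (i - 1) - k)) * x 2 ^ (b i * (m (i - 1) - k)) *
            x (i - 1) ^ (c i * (m (i - 1) - k)) * x i ^ k *
            x 0 ^ (k * (a i + b i + c i - 1) - b i * (m (i - 1) - m 2) -
              a i * (m (i - 1) - m 1))) = 0 := by
      intro k hk
      simp only [Finset.mem_Icc] at hk
      rcases Nat.lt_or_ge k (m (i - 1)) with hklt | hkge
      · rcases Nat.eq_zero_or_pos (a i) with ha0 | ha0
        swap
        · rw [hx1, zero_pow (Nat.mul_ne_zero (by omega) (by omega))]; ring
        rcases Nat.eq_zero_or_pos (b i) with hb0 | hb0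
        swap
        · rw [hx2' (by omega), zero_pow (Nat.mul_ne_zero (by omega) (by omega))]; ring
        -- a = b = 0 : exponent of x 0 is k * (c i - 1) > 0
        have hc2 : 2 ≤ c i := by
          refine two_le (c i) (m (i - 1)) (m i) ?_ hmi
          rw [ha0, hb0] at h1
          simpa using h1
        have hexp : 0 < k * (a i + b i + c i - 1) - b i * (m (i - 1) - m 2) -
            a i * (m (i - 1) - m 1) := by
          rw [ha0, hb0]
          simp only [Nat.zero_mul, Nat.sub_zero, Nat.zero_add]
          exact Nat.mul_pos (by omega) (by omega)
        rw [hx0, zero_pow (by omega)]; ring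
      · -- k = m (i-1): exponent of x 0 is m i - m (i-1) > 0
        have hkM : k = m (i - 1) := by omega
        have hS : 1 ≤ a i + b i + c i := by
          by_contra h
          have : a i = 0 ∧ b i = 0 ∧ c i = 0 := by omega
          obtain ⟨h1', h2', h3'⟩ := this
          rw [h1', h2', h3'] at h1
          simp at h1
          omega
        have e1 : k * (a i + b i + c i - 1)
            = a i * m (i - 1) + b i * m (i - 1) + c i * m (i - 1) - m (i - 1) := by
          rw [hkM, Nat.mul_sub, Nat.mul_one, Nat.mul_add, Nat.mul_add]
          ring_nf
        have e2 : b i * (m (i - 1) - m 2) = b i * m (i - 1) - b i * m 2 := Nat.mul_sub ..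
        have e3 : a i * (m (i - 1) - m 1) = a i * m (i - 1) - a i * m 1 := Nat.mul_sub ..
        have le2 : b i * m 2 ≤ b i * m (i - 1) := Nat.mul_le_mul_left _ hm2M
        have le3 : a i * m 1 ≤ a i * m (i - 1) := Nat.mul_le_mul_left _ hm1M
        have hexp : 0 < k * (a i + b i + c i - 1) - b i * (m (i - 1) - m 2) -
            a i * (m (i - 1) - m 1) := by
          rw [e1, e2, e3]
          omega
        rw [hx0, zero_pow (by omega)]; ring
    rw [Finset.sum_eq_zero hz1, Finset.sum_eq_zero hz2, add_zero, add_zero] at hF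
    exact pow_eq_zero_iff (by omega) |>.mp hF
  -- conclude
  intro j hj1 hjn
  rcases Nat.lt_or_ge j 2 with h | h
  · have : j = 1 := by omega
    rw [this]; exact hx1
  have hx2 : x 2 = 0 := key 3 le_rfl hn (Or.inr rfl)
  rcases Nat.eq_or_lt_of_le h with h2 | h2
  · rw [← h2]; exact hx2
  have := key (j + 1) (by omega) (by omega) (Or.inl hx2)
  simpa using this
end

section
/- Let K be a field (or any reduced commutative ring), let m_1 < m_2 < … < m_n be positive integers, fix 3 ≤ i ≤ n, and let a, b, c, α, β, γ be nonnegative integers with m_i = c·m_{i−1} + b·m_2 + a·m_1 = γ·m_{i−1} − β·m_2 − α·m_1, γ − β − α − 1 ≥ 0, and m_1 ≥ β·(m_2 − m_1). If t, x_i ∈ K and substituting x_0 = 1, x_j = t^{m_j} for 1 ≤ j ≤ i − 1 into F_{i−1} gives the value 0, then x_i = t^{m_i}. -/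
/-- The inductive step in the proof of Theorem 1 of the paper: over a field,
if substituting `x_0 = 1`, `x_j = t^{m_j}` for `1 ≤ j ≤ i-1` and `x_i = y`
into `F_{i-1}` gives `0`, then `y = t^{m_i}`. -/
theorem stmt_11 {K : Type*} [Field K] (n i : ℕ) (hi : 3 ≤ i) (hin : i ≤ n)
    (m : ℕ → ℕ)
    (hpos : ∀ j, 1 ≤ j → j ≤ n → 0 < m j)
    (hmono : ∀ j, 1 ≤ j → j < n → m j < m (j + 1))
    (a b c α β γ : ℕ)
    (heq1 : m i = c * m (i - 1) + b * m 2 + a * m 1)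
    (heq2 : m i + β * m 2 + α * m 1 = γ * m (i - 1))
    (hγ : β + α + 1 ≤ γ) (hβ : β * (m 2 - m 1) ≤ m 1)
    (t y : K)
    (hval : MvPolynomial.eval
        (fun j => if j = 0 then 1 else if j ≤ i - 1 then t ^ m j else y)
        (Fpoly K m i a b c α β γ) = 0) :
    y = t ^ m i := by
  set M := m (i - 1) with hMdef
  -- basic facts about m
  have hmono' : ∀ j k, 1 ≤ j → j ≤ k → k ≤ n → m j ≤ m k := by
    intro j k hj hjk hkn
    induction k with
    | zero => omega
    | succ k ih =>
      rcases Nat.lt_or_ge j (k+1) with h | h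
      · exact le_trans (ih (by omega) (by omega)) (hmono k (by omega) (by omega)).le
      · have : j = k + 1 := by omega
        simp [this]
  have h2M : m 2 ≤ M := hmono' 2 (i-1) (by omega) (by omega) (by omega)
  have h12 : m 1 < m 2 := hmono 1 (by omega) (by omega)
  have h1 : 0 < m 1 := hpos 1 (by omega) (by omega)
  have h1M : m 1 ≤ M := by omega
  have hM : 0 < M := by omega
  -- key bound : γ * (M - m 1) ≤ m i
  have hkey : γ * (M - m 1) ≤ m i := by
    have hsplit : β * m 2 = β * m 1 + β * (m 2 - m 1) := by
      rw [← Nat.mul_add]; congr 1; omega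
    have hchain : β * m 2 + α * m 1 ≤ γ * m 1 := by
      calc β * m 2 + α * m 1 = β * m 1 + β * (m 2 - m 1) + α * m 1 := by rw [hsplit]
        _ ≤ β * m 1 + m 1 + α * m 1 := by
            exact add_le_add_left (add_le_add_right hβ _) _
        _ = (β + α + 1) * m 1 := by ring
        _ ≤ γ * m 1 := Nat.mul_le_mul_right _ hγ
    rw [Nat.mul_sub γ M (m 1)]
    rw [Nat.sub_le_iff_le_add]
    rw [← heq2]
    omega
  -- the evaluation function
  set f : ℕ → K := fun j => if j = 0 then 1 else if j ≤ i - 1 then t ^ m j else y with hf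
  have hf0 : f 0 = 1 := rfl
  have hf1 : f 1 = t ^ m 1 := by simp [hf]; omega
  have hf2 : f 2 = t ^ m 2 := by simp [hf]; omega
  have hfi1 : f (i-1) = t ^ M := by
    have h0 : ¬ (i - 1 = 0) := by omega
    rw [hMdef]; simp [hf, h0]
  have hfi : f i = y := by
    have h0 : ¬ (i = 0) := by omega
    have h1 : ¬ (i ≤ i - 1) := by omega
    simp [hf, h0, h1]
  -- evaluate
  have hev : MvPolynomial.eval f (Fpoly K m i a b c α β γ)
      = ∑ k ∈ Finset.range (M + 1),
          (-1 : K) ^ k * (M.choose k : K) * (t ^ m i) ^ (M - k) * y ^ k := by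
    rw [Fpoly]
    simp only [map_add, map_sum, map_mul, map_pow, MvPolynomial.eval_C, MvPolynomial.eval_X,
      hf0, hf1, hf2, hfi1, hfi, one_pow, mul_one]
    have e1 : ∀ k ∈ Finset.Icc 1 (M - m 1),
        (-1 : K) ^ k * (M.choose k : K) *
          ((t ^ m 1) ^ (k * α) * (t ^ m 2) ^ (k * β) * (t ^ M) ^ (m i - k * γ) * y ^ k)
        = (-1 : K) ^ k * (M.choose k : K) * (t ^ m i) ^ (M - k) * y ^ k := by
      intro k hk
      rw [Finset.mem_Icc] at hk
      have hkγ : k * γ ≤ m i := by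
        calc k * γ ≤ (M - m 1) * γ := Nat.mul_le_mul_right _ hk.2
        _ = γ * (M - m 1) := Nat.mul_comm _ _
        _ ≤ m i := hkey
      have hexp : m 1 * (k * α) + m 2 * (k * β) + M * (m i - k * γ) = m i * (M - k) := by
        have h1' : M * (m i - k * γ) = M * m i - M * (k * γ) := Nat.mul_sub M _ _
        have h2' : m i * (M - k) = m i * M - m i * k := Nat.mul_sub _ _ _
        have h3' : k * (γ * M) = k * m i + k * (β * m 2) + k * (α * m 1) := by
          rw [← heq2]; ring
        have h4' : M * (k * γ) ≤ M * m i := Nat.mul_le_mul_left _ hkγ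
        have h5' : m i * k ≤ m i * M := Nat.mul_le_mul_left _ (by omega)
        have e1 : M * (k * γ) = k * (γ * M) := by ring
        have e2 : m 1 * (k * α) = k * (α * m 1) := by ring
        have e3 : m 2 * (k * β) = k * (β * m 2) := by ring
        have e4 : M * m i = m i * M := by ring
        have e5 : m i * k = k * m i := by ring
        omega
      rw [← pow_mul, ← pow_mul, ← pow_mul, ← pow_mul, ← pow_add, ← pow_add, hexp, pow_mul]
      ring
    have e2 : ∀ k ∈ Finset.Icc (M - m 1 + 1) M,
        (-1 : K) ^ k * (M.choose k : K) *
          ((t ^ m 1) ^ (a * (M - k)) * (t ^ m 2) ^ (b * (M - k)) * (t ^ M) ^ (c * (M - k)) * y ^ k)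
        = (-1 : K) ^ k * (M.choose k : K) * (t ^ m i) ^ (M - k) * y ^ k := by
      intro k hk
      have hexp : m 1 * (a * (M - k)) + m 2 * (b * (M - k)) + M * (c * (M - k))
          = m i * (M - k) := by rw [heq1]; ring
      rw [← pow_mul, ← pow_mul, ← pow_mul, ← pow_mul, ← pow_add, ← pow_add, hexp, pow_mul]
      ring
    rw [Finset.sum_congr rfl e1, Finset.sum_congr rfl e2]
    have hIoc1 : Finset.Icc 1 (M - m 1) = Finset.Ioc 0 (M - m 1) := by
      ext x; simp [Nat.lt_iff_add_one_le]
    have hIoc2 : Finset.Icc (M - m 1 + 1) M = Finset.Ioc (M - m 1) M := by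
      ext x; simp only [Finset.mem_Icc, Finset.mem_Ioc]; omega
    rw [hIoc1, hIoc2, add_assoc,
      Finset.sum_Ioc_consecutive _ (Nat.zero_le _) (by omega : M - m 1 ≤ M)]
    have hrange : Finset.range (M + 1) = insert 0 (Finset.Ioc 0 M) := by
      ext x
      simp only [Finset.mem_range, Finset.mem_insert, Finset.mem_Ioc]
      omega
    have hpow : (t ^ M) ^ m i = (t ^ m i) ^ M := by
      rw [← pow_mul, ← pow_mul, Nat.mul_comm]
    rw [hpow, hrange, Finset.sum_insert (by simp)]
    simp
  have hsub : (t ^ m i - y) ^ M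
      = ∑ k ∈ Finset.range (M + 1),
          (-1 : K) ^ k * (M.choose k : K) * (t ^ m i) ^ (M - k) * y ^ k := by
    rw [sub_pow, ← Finset.sum_range_reflect]
    refine Finset.sum_congr rfl fun k hk => ?_
    rw [Finset.mem_range, Nat.lt_succ_iff] at hk
    have h1' : M + 1 - 1 - k = M - k := by omega
    rw [h1', Nat.sub_sub_self hk, Nat.choose_symm hk]
    have hsign : (-1 : K) ^ (M - k + M) = (-1 : K) ^ k := by
      have : M - k + M = k + 2 * (M - k) := by omega
      rw [this, pow_add, pow_mul]; simp
    rw [hsign]; ring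
  rw [hev, ← hsub] at hval
  have h0 := pow_eq_zero_iff hM.ne' |>.mp hval
  exact (sub_eq_zero.mp h0).symm
end

section
/- Let K be an algebraically closed field, let m_1 < m_2 < … < m_n be positive integers with gcd(m_1, …, m_n) = 1, and suppose that for each 3 ≤ i ≤ n there are nonnegative integers a_i, b_i, c_i, α_i, β_i, γ_i with m_i = c_i m_{i−1} + b_i m_2 + a_i m_1 = γ_i m_{i−1} − β_i m_2 − α_i m_1, m_{i−1} > a_i, b_i, α_i, β_i, β_3 = b_3 = 0, γ_i − β_i − α_i − 1 ≥ 0, and m_1 ≥ β_i (m_2 − m_1). Then the set of common zeros in K^{n+1} of the n − 1 polynomials F_1, …, F_{n−1} is exactly the affine cone over the monomial curve C(m_1, …, m_n), namely the set {(u^{m_n}, u^{m_n − m_1} v^{m_1}, …, u^{m_n − m_{n−1}} v^{m_{n−1}}, v^{m_n}) : u, v ∈ K}. In particular, C(m_1, …, m_n) ⊆ P^n is a set-theoretic complete intersection. -/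
namespace STCI

lemma alt_pow_sum {K : Type*} [CommRing K] (M : ℕ) (r : K) :
    ∑ k ∈ Finset.range (M+1), (-1:K)^k * (M.choose k) * r^k = (1 - r)^M := by
  have h : (1 - r)^M = (-r + 1)^M := by ring
  rw [h, add_pow]
  refine Finset.sum_congr rfl fun k hk => ?_
  rw [one_pow, neg_pow]
  ring

lemma sum_split {A : Type*} [AddCommMonoid A] (f : ℕ → A) (M N : ℕ) (hN : N ≤ M) :
    ∑ k ∈ Finset.range (M+1), f k
      = f 0 + ∑ k ∈ Finset.Icc 1 N, f k + ∑ k ∈ Finset.Icc (N+1) M, f k := by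
  have h1 : Finset.Icc 1 N = Finset.Ioc 0 N := by ext x; simp [Nat.lt_iff_add_one_le]
  have h2 : Finset.Icc (N+1) M = Finset.Ioc N M := by ext x; simp only [Finset.mem_Icc, Finset.mem_Ioc]; omega
  have h3 : Finset.range (M+1) = insert 0 (Finset.Ioc 0 M) := by
    ext x; simp
  rw [h1, h2, add_assoc, Finset.sum_Ioc_consecutive f (Nat.zero_le N) hN, h3,
    Finset.sum_insert (by simp)]

/-- The evaluated form of `Fpoly`. -/
def S {K : Type*} [CommRing K] (m1 m2 M mi a b c α β γ : ℕ)
    (X0 X1 X2 XP XI : K) : K :=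
  XP ^ mi
    + ∑ k ∈ Finset.Icc 1 (M - m1),
        (-1 : K) ^ k * (M.choose k : K) *
          (X1 ^ (k * α) * X2 ^ (k * β) * XP ^ (mi - k * γ) * XI ^ k *
            X0 ^ (k * (γ - β - α - 1)))
    + ∑ k ∈ Finset.Icc (M - m1 + 1) M,
        (-1 : K) ^ k * (M.choose k : K) *
          (X1 ^ (a * (M - k)) * X2 ^ (b * (M - k)) * XP ^ (c * (M - k)) * XI ^ k *
            X0 ^ (k * (a + b + c - 1) - b * (M - m2) - a * (M - m1)))


/-- Hypotheses at a single index. -/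
structure Hyp (m1 m2 M mi a b c α β γ : ℕ) : Prop where
  h01 : 0 < m1
  h12 : m1 < m2
  h2M : m2 ≤ M
  hMi : M < mi
  hr1 : mi = c*M + b*m2 + a*m1
  hr2 : mi + β*m2 + α*m1 = γ*M
  ha : a < M
  hb : b < M
  hγ : β + α + 1 ≤ γ
  hβm : β * (m2 - m1) ≤ m1
  hα : α = if a = 0 then 0 else M - a
  hβ : β = if b = 0 then 0 else M - b

variable {m1 m2 M mi a b c α β γ : ℕ}

lemma Hyp.h1M (H : Hyp m1 m2 M mi a b c α β γ) : m1 ≤ M := le_trans H.h12.le H.h2M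
lemma Hyp.M0 (H : Hyp m1 m2 M mi a b c α β γ) : 0 < M := lt_of_lt_of_le H.h01 H.h1M

/-- First-range exponent bound, with the β-slack. -/
lemma Hyp.A1' (H : Hyp m1 m2 M mi a b c α β γ) {k : ℕ} (hk : k ≤ M - m1) :
    k * γ + m1 ≤ mi + β * (m2 - m1) := by
  have hm1M : m1 ≤ M := H.h1M
  have hkM : k + m1 ≤ M := by omega
  have g4 : (γ:ℤ)*M = mi + β*m2 + α*m1 := by exact_mod_cast (H.hr2).symm
  have g1 : (m1:ℤ) ≤ (M:ℤ) - k := by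
    have : (k:ℤ) + m1 ≤ M := by exact_mod_cast hkM
    linarith
  have g2 : (β:ℤ) + α + 1 ≤ γ := by exact_mod_cast H.hγ
  have g3' : (β:ℤ) * ((m2:ℤ) - m1) ≤ m1 := by
    have := H.hβm
    zify [H.h12.le] at this
    linarith
  have hint1 : (γ:ℤ) * m1 ≤ γ * ((M:ℤ) - k) :=
    mul_le_mul_of_nonneg_left g1 (by positivity)
  have hint2 : ((β:ℤ) + α + 1) * m1 ≤ γ * m1 :=
    mul_le_mul_of_nonneg_right g2 (by positivity)
  zify [H.h12.le]
  nlinarith [hint1, hint2, g3', g4]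

lemma Hyp.A1 (H : Hyp m1 m2 M mi a b c α β γ) {k : ℕ} (hk : k ≤ M - m1) :
    k * γ ≤ mi := by
  have := H.A1' hk
  have hβm := H.hβm
  omega

lemma Hyp.A2 (H : Hyp m1 m2 M mi a b c α β γ) : 1 ≤ a + b + c := by
  by_contra h
  have ha0 : a = 0 := by omega
  have hb0 : b = 0 := by omega
  have hc0 : c = 0 := by omega
  have := H.hr1
  rw [ha0, hb0, hc0] at this
  simp at this
  have := H.hMi
  omega


lemma Hyp.gz (H : Hyp m1 m2 M mi a b c α β γ) :
    (γ:ℤ) = c + (if b = 0 then (0:ℤ) else m2) + (if a = 0 then (0:ℤ) else m1) := by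
  have hM : (M:ℤ) ≠ 0 := by exact_mod_cast H.M0.ne'
  apply mul_right_cancel₀ hM
  have h1 : (mi:ℤ) = c*M + b*m2 + a*m1 := by exact_mod_cast H.hr1
  by_cases ha0 : a = 0 <;> by_cases hb0 : b = 0
  · have hα' : α = 0 := by rw [H.hα]; simp [ha0]
    have hβ' : β = 0 := by rw [H.hβ]; simp [hb0]
    have h2 := H.hr2
    rw [hα', hβ'] at h2
    have h2z : (mi:ℤ) = γ*M := by exact_mod_cast (by omega : mi = γ*M)
    simp only [if_pos ha0, if_pos hb0]
    rw [ha0, hb0] at h1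
    push_cast at h1
    linear_combination h1 - h2z
  · have hα' : α = 0 := by rw [H.hα]; simp [ha0]
    have hβ' : β = M - b := by rw [H.hβ]; simp [hb0]
    have h2 := H.hr2
    rw [hα', hβ'] at h2
    have h2z : (mi:ℤ) + ((M:ℤ) - b)*m2 = γ*M := by
      zify [le_of_lt H.hb] at h2; linarith
    simp only [if_pos ha0, if_neg hb0]
    rw [ha0] at h1
    push_cast at h1
    linear_combination h1 - h2z
  · have hα' : α = M - a := by rw [H.hα]; simp [ha0]
    have hβ' : β = 0 := by rw [H.hβ]; simp [hb0]
    have h2 := H.hr2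
    rw [hα', hβ'] at h2
    have h2z : (mi:ℤ) + ((M:ℤ) - a)*m1 = γ*M := by
      zify [le_of_lt H.ha] at h2; linarith
    simp only [if_neg ha0, if_pos hb0]
    rw [hb0] at h1
    push_cast at h1
    linear_combination h1 - h2z
  · have hα' : α = M - a := by rw [H.hα]; simp [ha0]
    have hβ' : β = M - b := by rw [H.hβ]; simp [hb0]
    have h2 := H.hr2
    rw [hα', hβ'] at h2
    have h2z : (mi:ℤ) + ((M:ℤ) - b)*m2 + ((M:ℤ) - a)*m1 = γ*M := by
      zify [le_of_lt H.ha, le_of_lt H.hb] at h2; linarith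
    simp only [if_neg ha0, if_neg hb0]
    linear_combination h1 - h2z

lemma Hyp.G (H : Hyp m1 m2 M mi a b c α β γ) :
    M - m1 + 1 ≤ c * (M - m1 + 1) + b * (m2 - m1 + 1) + a := by
  have hm1M : m1 ≤ M := H.h1M
  rcases Nat.eq_zero_or_pos c with hc | hc
  swap
  · have : M - m1 + 1 ≤ c * (M - m1 + 1) := Nat.le_mul_of_pos_left _ hc
    omega
  subst hc
  have hgz := H.gz
  have hγineq : (β:ℤ) + α + 1 ≤ γ := by exact_mod_cast H.hγ
  have h12z : (m1:ℤ) < m2 := by exact_mod_cast H.h12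
  have h2Mz : (m2:ℤ) ≤ M := by exact_mod_cast H.h2M
  zify [hm1M, H.h12.le]
  rcases Nat.eq_zero_or_pos a with ha0 | ha0 <;>
    rcases Nat.eq_zero_or_pos b with hb0 | hb0
  · exfalso; have := H.A2; omega
  · -- a = 0, b > 0 : γ = m2
    have hβz : (β:ℤ) = M - b := by
      rw [H.hβ]; rw [if_neg hb0.ne']; push_cast [Nat.cast_sub (le_of_lt H.hb)]; ring
    have hαz : (α:ℤ) = 0 := by rw [H.hα]; simp [ha0]
    rw [if_neg hb0.ne', if_pos ha0] at hgz
    -- from hγineq : M - b + 1 ≤ m2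
    have hbge : (M:ℤ) - m2 + 1 ≤ b := by
      rw [hβz, hαz] at hγineq
      push_cast at hgz hγineq ⊢
      omega
    have key : (0:ℤ) ≤ ((M:ℤ) - m2)*((m2:ℤ) - m1) := by
      apply mul_nonneg <;> linarith
    push_cast [ha0]
    nlinarith [hbge, key, h12z, h2Mz]
  · -- a > 0, b = 0 : γ = m1
    have hαz : (α:ℤ) = M - a := by
      rw [H.hα]; rw [if_neg ha0.ne']; push_cast [Nat.cast_sub (le_of_lt H.ha)]; ring
    have hβz : (β:ℤ) = 0 := by rw [H.hβ]; simp [hb0]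
    rw [if_pos hb0, if_neg ha0.ne'] at hgz
    rw [hαz, hβz] at hγineq
    push_cast at hgz hγineq
    push_cast [hb0]
    omega
  · -- a > 0, b > 0 : γ = m1 + m2
    have hαz : (α:ℤ) = M - a := by
      rw [H.hα]; rw [if_neg ha0.ne']; push_cast [Nat.cast_sub (le_of_lt H.ha)]; ring
    have hβz : (β:ℤ) = M - b := by
      rw [H.hβ]; rw [if_neg hb0.ne']; push_cast [Nat.cast_sub (le_of_lt H.hb)]; ring
    rw [if_neg hb0.ne', if_neg ha0.ne'] at hgz
    rw [hαz, hβz] at hγineq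
    have hb0' : (1:ℤ) ≤ b := by exact_mod_cast hb0
    have hbq : (b:ℤ) ≤ (b:ℤ) * ((m2:ℤ) - m1 + 1) := by nlinarith [h12z, hb0']
    push_cast at hgz hγineq ⊢
    linarith [hgz, hγineq, hbq]

lemma Hyp.KB (H : Hyp m1 m2 M mi a b c α β γ) :
    (m1 - 1) * (a + b + c - 1) + M ≤ mi := by
  have hG := H.G
  have h1 : (mi:ℤ) = c*M + b*m2 + a*m1 := by exact_mod_cast H.hr1
  have hGz : (M:ℤ) - m1 + 1 ≤ c * ((M:ℤ) - m1 + 1) + b * ((m2:ℤ) - m1 + 1) + a := by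
    zify [H.h1M, H.h12.le] at hG
    convert hG using 2 <;> push_cast <;> ring
  have hA2 : 1 ≤ a + b + c := H.A2
  zify [H.h01, hA2]
  nlinarith [hGz, h1]

lemma Hyp.A3 (H : Hyp m1 m2 M mi a b c α β γ) {k : ℕ}
    (hk1 : M - m1 + 1 ≤ k) (hk2 : k ≤ M) :
    b*(M - m2) + a*(M - m1) + k ≤ k*(a + b + c) := by
  have hKB := H.KB
  have hA2 : 1 ≤ a + b + c := H.A2
  have hKBz : ((m1:ℤ) - 1) * ((a:ℤ) + b + c - 1) + M ≤ mi := by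
    zify [H.h01, hA2] at hKB
    convert hKB using 2 <;> push_cast <;> ring
  have h1 : (mi:ℤ) = c*M + b*m2 + a*m1 := by exact_mod_cast H.hr1
  have hj : (M:ℤ) - k ≤ (m1:ℤ) - 1 := by
    have : M - m1 + 1 ≤ k := hk1
    have h1M := H.h1M
    have : (M:ℤ) - m1 + 1 ≤ k := by
      zify [H.h1M] at this; linarith
    linarith
  have hmono : ((M:ℤ) - k) * ((a:ℤ) + b + c - 1) ≤ ((m1:ℤ) - 1) * ((a:ℤ) + b + c - 1) := by
    apply mul_le_mul_of_nonneg_right hj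
    have : (1:ℤ) ≤ (a:ℤ) + b + c := by exact_mod_cast hA2
    linarith
  zify [H.h2M, H.h1M]
  nlinarith [hmono, hKBz, h1]

/-- The value of the `x₀`-exponent at `k = M` in the second sum. -/
lemma Hyp.A4 (H : Hyp m1 m2 M mi a b c α β γ) :
    M*(a + b + c - 1) - b*(M - m2) - a*(M - m1) = mi - M := by
  have h3 := H.A3 (k := M) (by have := H.h01; have := H.h1M; omega) le_rfl
  have hA2 : 1 ≤ a + b + c := H.A2
  have e1 : M*(a+b+c-1) = M*(a+b+c) - M := by
    rw [Nat.mul_sub]; simp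
  obtain ⟨P, hP⟩ : ∃ P, b*(M - m2) = P := ⟨_, rfl⟩
  obtain ⟨Q, hQ⟩ : ∃ Q, a*(M - m1) = Q := ⟨_, rfl⟩
  obtain ⟨T, hT⟩ : ∃ T, M*(a+b+c) = T := ⟨_, rfl⟩
  have hPz : (P:ℤ) = b*M - b*m2 := by
    rw [← hP]; push_cast [Nat.cast_sub H.h2M]; ring
  have hQz : (Q:ℤ) = a*M - a*m1 := by
    rw [← hQ]; push_cast [Nat.cast_sub H.h1M]; ring
  have hTz : (T:ℤ) = M*a + M*b + M*c := by
    rw [← hT]; push_cast; ring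
  rw [hP, hQ, hT] at h3
  rw [e1, hP, hQ, hT]
  have h1 : (mi:ℤ) = c*M + b*m2 + a*m1 := by exact_mod_cast H.hr1
  have hMT : M ≤ T := by
    rw [← hT]; calc M = M * 1 := (Nat.mul_one M).symm
      _ ≤ M * (a+b+c) := Nat.mul_le_mul_left M hA2
  have hMmi : M < mi := H.hMi
  zify [hMT, (by omega : P ≤ T - M), (by omega : Q ≤ T - M - P), hMmi.le]
  linarith [hPz, hQz, hTz, h1]


lemma Hyp.A5 (H : Hyp m1 m2 M mi a b c α β γ) {k : ℕ}
    (hk1 : M - m1 + 1 ≤ k) (hk2 : k ≤ M) :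
    a*(M-k) + b*(M-k) + c*(M-k) + k
      + (k*(a+b+c-1) - b*(M-m2) - a*(M-m1)) = mi := by
  have h3 := H.A3 hk1 hk2
  have e1 : k*(a+b+c-1) = k*(a+b+c) - k := by rw [Nat.mul_sub]; simp
  rw [e1]
  obtain ⟨P, hP⟩ : ∃ P, b*(M - m2) = P := ⟨_, rfl⟩
  obtain ⟨Q, hQ⟩ : ∃ Q, a*(M - m1) = Q := ⟨_, rfl⟩
  obtain ⟨T, hT⟩ : ∃ T, k*(a+b+c) = T := ⟨_, rfl⟩
  have hPz : (P:ℤ) = b*M - b*m2 := by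
    rw [← hP]; push_cast [Nat.cast_sub H.h2M]; ring
  have hQz : (Q:ℤ) = a*M - a*m1 := by
    rw [← hQ]; push_cast [Nat.cast_sub (le_trans H.h12.le H.h2M)]; ring
  have hTz : (T:ℤ) = k*a + k*b + k*c := by rw [← hT]; push_cast; ring
  rw [hP, hQ, hT] at h3 ⊢
  have h1 : (mi:ℤ) = c*M + b*m2 + a*m1 := by exact_mod_cast H.hr1
  zify [hk2, (by omega : k ≤ T), (by omega : P ≤ T - k), (by omega : Q ≤ T - k - P)]
  linarith [hPz, hQz, hTz, h1]


lemma Hyp.unitrel {K : Type*} [Field K] (H : Hyp m1 m2 M mi a b c α β γ)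
    {k : ℕ} (hk : k ≤ M) {y1 y2 yp : K}
    (h1 : y1 ≠ 0) (h2 : y2 ≠ 0) (hp : yp ≠ 0)
    (rel1 : y1 ^ M = yp ^ m1) (rel2 : y2 ^ M = yp ^ m2) :
    y1 ^ (a*(M-k)) * y2 ^ (b*(M-k)) * yp ^ (c*(M-k) + k*γ)
      = y1 ^ (k*α) * y2 ^ (k*β) * yp ^ mi := by
  set ea : ℤ := if a = 0 then 0 else (k:ℤ) - a with hea
  set eb : ℤ := if b = 0 then 0 else (k:ℤ) - b with heb
  have F1 : ((a*(M-k) : ℕ):ℤ) + (M:ℤ)*ea = ((k*α : ℕ):ℤ) := by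
    by_cases ha0 : a = 0
    · rw [hea, if_pos ha0, H.hα, if_pos ha0, ha0]; push_cast; ring
    · rw [hea, if_neg ha0, H.hα, if_neg ha0]
      push_cast [Nat.cast_sub hk, Nat.cast_sub (le_of_lt H.ha)]
      ring
  have F2 : ((b*(M-k) : ℕ):ℤ) + (M:ℤ)*eb = ((k*β : ℕ):ℤ) := by
    by_cases hb0 : b = 0
    · rw [heb, if_pos hb0, H.hβ, if_pos hb0, hb0]; push_cast; ring
    · rw [heb, if_neg hb0, H.hβ, if_neg hb0]
      push_cast [Nat.cast_sub hk, Nat.cast_sub (le_of_lt H.hb)]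
      ring
  have F3 : ((c*(M-k) + k*γ : ℕ):ℤ) = (mi:ℤ) + (m1:ℤ)*ea + (m2:ℤ)*eb := by
    have hgz := H.gz
    have hmi : (mi:ℤ) = c*M + b*m2 + a*m1 := by exact_mod_cast H.hr1
    by_cases ha0 : a = 0 <;> by_cases hb0 : b = 0
    · rw [hea, if_pos ha0, heb, if_pos hb0]
      rw [if_pos ha0, if_pos hb0] at hgz
      rw [ha0, hb0] at hmi
      push_cast [Nat.cast_sub hk] at hmi ⊢
      linear_combination (k:ℤ)*hgz - hmi
    · rw [hea, if_pos ha0, heb, if_neg hb0]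
      rw [if_pos ha0, if_neg hb0] at hgz
      rw [ha0] at hmi
      push_cast [Nat.cast_sub hk] at hmi ⊢
      linear_combination (k:ℤ)*hgz - hmi
    · rw [hea, if_neg ha0, heb, if_pos hb0]
      rw [if_neg ha0, if_pos hb0] at hgz
      rw [hb0] at hmi
      push_cast [Nat.cast_sub hk] at hmi ⊢
      linear_combination (k:ℤ)*hgz - hmi
    · rw [hea, if_neg ha0, heb, if_neg hb0]
      rw [if_neg ha0, if_neg hb0] at hgz
      push_cast [Nat.cast_sub hk] at hmi ⊢
      linear_combination (k:ℤ)*hgz - hmi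
  have r1 : y1 ^ (M:ℤ) = yp ^ ((m1:ℕ):ℤ) := by
    rw [zpow_natCast, zpow_natCast]; exact rel1
  have r2 : y2 ^ (M:ℤ) = yp ^ ((m2:ℕ):ℤ) := by
    rw [zpow_natCast, zpow_natCast]; exact rel2
  have split : yp ^ ((mi:ℤ) + (m1:ℤ)*ea + (m2:ℤ)*eb)
      = yp ^ (mi:ℤ) * (y1 ^ (M:ℤ))^ea * (y2 ^ (M:ℤ))^eb := by
    rw [zpow_add₀ hp, zpow_add₀ hp, zpow_mul, zpow_mul, r1, r2]
  calc y1 ^ (a*(M-k)) * y2 ^ (b*(M-k)) * yp ^ (c*(M-k) + k*γ)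
      = y1 ^ (a*(M-k)) * y2 ^ (b*(M-k)) * yp ^ ((c*(M-k) + k*γ : ℕ):ℤ) := by
        rw [zpow_natCast]
    _ = y1 ^ (a*(M-k)) * y2 ^ (b*(M-k)) *
          (yp ^ (mi:ℤ) * (y1 ^ (M:ℤ))^ea * (y2 ^ (M:ℤ))^eb) := by
        rw [F3, split]
    _ = (y1 ^ ((a*(M-k):ℕ):ℤ) * y1 ^ ((M:ℤ)*ea)) *
          (y2 ^ ((b*(M-k):ℕ):ℤ) * y2 ^ ((M:ℤ)*eb)) * yp ^ ((mi:ℕ):ℤ) := by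
        rw [← zpow_natCast y1 (a*(M-k)), ← zpow_natCast y2 (b*(M-k)),
          zpow_mul y1, zpow_mul y2]
        ring
    _ = y1 ^ (((a*(M-k):ℕ):ℤ) + (M:ℤ)*ea) * y2 ^ (((b*(M-k):ℕ):ℤ) + (M:ℤ)*eb)
          * yp ^ ((mi:ℕ):ℤ) := by
        rw [zpow_add₀ h1, zpow_add₀ h2]
    _ = y1 ^ ((k*α:ℕ):ℤ) * y2 ^ ((k*β:ℕ):ℤ) * yp ^ ((mi:ℕ):ℤ) := by rw [F1, F2]
    _ = y1 ^ (k*α) * y2 ^ (k*β) * yp ^ mi := by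
        rw [zpow_natCast y1 (k*α), zpow_natCast y2 (k*β), zpow_natCast yp mi]


/-- Laurent-form evaluation on points with invertible coordinates. -/
lemma Hyp.SL {K : Type*} [Field K] (H : Hyp m1 m2 M mi a b c α β γ)
    (x0 y1 y2 yp yi : K) (hx0 : x0 ≠ 0) (h1 : y1 ≠ 0) (h2 : y2 ≠ 0) (hp : yp ≠ 0)
    (rel1 : y1 ^ M = yp ^ m1) (rel2 : y2 ^ M = yp ^ m2) :
    S m1 m2 M mi a b c α β γ x0 (x0*y1) (x0*y2) (x0*yp) (x0*yi)
      = x0 ^ mi * yp ^ mi * (1 - y1^α * y2^β * yi * (yp^γ)⁻¹) ^ M := by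
  have hR := alt_pow_sum M (y1^α * y2^β * yi * (yp^γ)⁻¹)
  rw [← hR, Finset.mul_sum,
    sum_split (fun k => x0 ^ mi * yp ^ mi *
      ((-1:K)^k * (M.choose k) * (y1^α * y2^β * yi * (yp^γ)⁻¹)^k)) M (M - m1)
      (Nat.sub_le M m1)]
  unfold S
  refine congrArg₂ (· + ·) (congrArg₂ (· + ·) ?_ ?_) ?_
  · simp [mul_pow]
  · refine Finset.sum_congr rfl fun k hk => ?_
    simp only [Finset.mem_Icc] at hk
    have hkγ : k*γ ≤ mi := H.A1 hk.2
    have hRk : (y1^α*y2^β*yi*(yp^γ)⁻¹)^k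
        = y1^(k*α) * y2^(k*β) * yi^k * (yp^(k*γ))⁻¹ := by
      rw [mul_pow, mul_pow, mul_pow, ← inv_pow, ← pow_mul, ← pow_mul, ← pow_mul,
        Nat.mul_comm α k, Nat.mul_comm β k, Nat.mul_comm γ k]
      rw [inv_pow]
    have hG : k*α + k*β + k + k*(γ-β-α-1) = k*γ := by
      have h3 := H.hγ
      zify [show β ≤ γ by omega, show α ≤ γ - β by omega,
        show 1 ≤ γ - β - α by omega]
      ring
    have he0 : k*α + k*β + (mi - k*γ) + k + k*(γ-β-α-1) = mi := by
      have : k*α + k*β + (mi - k*γ) + k + k*(γ-β-α-1)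
          = (mi - k*γ) + (k*α + k*β + k + k*(γ-β-α-1)) := by ring
      rw [this, hG]
      omega
    rw [hRk]
    calc (-1:K)^k * (M.choose k) *
          ((x0*y1)^(k*α) * (x0*y2)^(k*β) * (x0*yp)^(mi - k*γ) * (x0*yi)^k *
            x0^(k*(γ-β-α-1)))
        = (-1:K)^k * (M.choose k) *
            x0^(k*α + k*β + (mi - k*γ) + k + k*(γ-β-α-1)) *
            (y1^(k*α) * y2^(k*β) * yp^(mi - k*γ) * yi^k) := by
          rw [pow_add, pow_add, pow_add, pow_add]; ring
      _ = (-1:K)^k * (M.choose k) * x0^mi *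
            (y1^(k*α) * y2^(k*β) * yp^(mi - k*γ) * yi^k) := by rw [he0]
      _ = (-1:K)^k * (M.choose k) * x0^mi *
            (y1^(k*α) * y2^(k*β) * (yp^mi * (yp^(k*γ))⁻¹) * yi^k) := by
          rw [pow_sub₀ yp hp hkγ]
      _ = x0^mi * yp^mi *
            ((-1:K)^k * (M.choose k) * (y1^(k*α) * y2^(k*β) * yi^k * (yp^(k*γ))⁻¹)) := by
          ring
  · refine Finset.sum_congr rfl fun k hk => ?_
    simp only [Finset.mem_Icc] at hk
    have hur := H.unitrel hk.2 h1 h2 hp rel1 rel2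
    have he0 := H.A5 hk.1 hk.2
    have hRk : (y1^α*y2^β*yi*(yp^γ)⁻¹)^k
        = y1^(k*α) * y2^(k*β) * yi^k * (yp^(k*γ))⁻¹ := by
      rw [mul_pow, mul_pow, mul_pow, ← inv_pow, ← pow_mul, ← pow_mul, ← pow_mul,
        Nat.mul_comm α k, Nat.mul_comm β k, Nat.mul_comm γ k]
      rw [inv_pow]
    rw [hRk]
    have hcan : (yp:K)^(c*(M-k)) = yp^(c*(M-k)+k*γ) * (yp^(k*γ))⁻¹ := by
      rw [pow_add, mul_inv_cancel_right₀ (pow_ne_zero _ hp)]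
    calc (-1:K)^k * (M.choose k) *
          ((x0*y1)^(a*(M-k)) * (x0*y2)^(b*(M-k)) * (x0*yp)^(c*(M-k)) * (x0*yi)^k *
            x0^(k*(a+b+c-1) - b*(M-m2) - a*(M-m1)))
        = (-1:K)^k * (M.choose k) *
            x0^(a*(M-k) + b*(M-k) + c*(M-k) + k
              + (k*(a+b+c-1) - b*(M-m2) - a*(M-m1))) *
            (y1^(a*(M-k)) * y2^(b*(M-k)) * yp^(c*(M-k)) * yi^k) := by
          rw [pow_add, pow_add, pow_add, pow_add]; ring
      _ = (-1:K)^k * (M.choose k) * x0^mi *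
            (y1^(a*(M-k)) * y2^(b*(M-k)) * yp^(c*(M-k)) * yi^k) := by rw [he0]
      _ = (-1:K)^k * (M.choose k) * x0^mi *
            ((y1^(a*(M-k)) * y2^(b*(M-k)) * yp^(c*(M-k)+k*γ)) * yi^k * (yp^(k*γ))⁻¹) := by
          rw [hcan]; ring
      _ = (-1:K)^k * (M.choose k) * x0^mi *
            ((y1^(k*α) * y2^(k*β) * yp^mi) * yi^k * (yp^(k*γ))⁻¹) := by
          rw [hur]
      _ = x0^mi * yp^mi *
            ((-1:K)^k * (M.choose k) * (y1^(k*α) * y2^(k*β) * yi^k * (yp^(k*γ))⁻¹)) := by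
          ring

/-- Vanishing form when `x1 = x2 = xp = 0`. -/
lemma Hyp.SV {K : Type*} [Field K] (H : Hyp m1 m2 M mi a b c α β γ)
    (x0 x1 x2 xp xi : K) (h1 : x1 = 0) (h2 : x2 = 0) (hp : xp = 0) :
    S m1 m2 M mi a b c α β γ x0 x1 x2 xp xi
      = (-1:K)^M * xi^M * x0^(M*(a+b+c-1) - b*(M-m2) - a*(M-m1)) := by
  subst h1; subst h2; subst hp
  unfold S
  have hmi0 : mi ≠ 0 := by have := H.hMi; omega
  rw [zero_pow hmi0]
  have hs1 : ∑ k ∈ Finset.Icc 1 (M - m1),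
      (-1 : K) ^ k * (M.choose k : K) *
        ((0:K) ^ (k * α) * (0:K) ^ (k * β) * (0:K) ^ (mi - k * γ) * xi ^ k *
          x0 ^ (k * (γ - β - α - 1))) = 0 := by
    refine Finset.sum_eq_zero fun k hk => ?_
    simp only [Finset.mem_Icc] at hk
    rcases Nat.eq_zero_or_pos β with hβ0 | hβpos
    · have h1' := H.A1' hk.2
      rw [hβ0] at h1'
      simp only [Nat.zero_mul, Nat.add_zero] at h1'
      have : mi - k*γ ≠ 0 := by
        have h01 := H.h01
        omega
      rw [zero_pow this]
      ring
    · have : k*β ≠ 0 := Nat.mul_ne_zero (by omega) (by omega)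
      rw [zero_pow this]
      ring
  have hs2 : ∑ k ∈ Finset.Icc (M - m1 + 1) M,
      (-1 : K) ^ k * (M.choose k : K) *
        ((0:K) ^ (a * (M - k)) * (0:K) ^ (b * (M - k)) * (0:K) ^ (c * (M - k)) * xi ^ k *
          x0 ^ (k * (a + b + c - 1) - b * (M - m2) - a * (M - m1)))
      = (-1:K)^M * xi^M * x0^(M*(a+b+c-1) - b*(M-m2) - a*(M-m1)) := by
    have hmem : M ∈ Finset.Icc (M - m1 + 1) M := by
      simp only [Finset.mem_Icc]
      have := H.h01
      have := H.h1M
      omega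
    rw [Finset.sum_eq_single_of_mem M hmem]
    · simp only [Nat.sub_self, Nat.choose_self, Nat.cast_one, Nat.mul_zero,
        Nat.zero_mul, pow_zero, one_mul, mul_one]
      ring
    · intro k hk hkM
      simp only [Finset.mem_Icc] at hk
      have hMk : M - k ≠ 0 := by omega
      have h2' := H.A2
      rcases Nat.eq_zero_or_pos a with ha0 | hapos
      · rcases Nat.eq_zero_or_pos b with hb0 | hbpos
        · have hcpos : 0 < c := by omega
          rw [zero_pow (show c*(M-k) ≠ 0 from Nat.mul_ne_zero (by omega) hMk)]
          ring
        · rw [zero_pow (show b*(M-k) ≠ 0 from Nat.mul_ne_zero (by omega) hMk)]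
          ring
      · rw [zero_pow (show a*(M-k) ≠ 0 from Nat.mul_ne_zero (by omega) hMk)]
        ring
  rw [hs1, hs2]
  ring

/-- The case `x0 = 0`. -/
lemma Hyp.SZ {K : Type*} [Field K] (H : Hyp m1 m2 M mi a b c α β γ)
    (x0 x1 x2 xp xi : K) (h0 : x0 = 0) (h1 : x1 = 0)
    (h2 : (β = 0 ∧ b = 0) ∨ x2 = 0) :
    S m1 m2 M mi a b c α β γ x0 x1 x2 xp xi = xp ^ mi := by
  subst h0; subst h1
  unfold S
  have hs1 : ∑ k ∈ Finset.Icc 1 (M - m1),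
      (-1 : K) ^ k * (M.choose k : K) *
        ((0:K) ^ (k * α) * x2 ^ (k * β) * xp ^ (mi - k * γ) * xi ^ k *
          (0:K) ^ (k * (γ - β - α - 1))) = 0 := by
    refine Finset.sum_eq_zero fun k hk => ?_
    simp only [Finset.mem_Icc] at hk
    by_cases hα0 : α = 0
    · by_cases hγ1 : γ = β + α + 1
      · have hβpos : β ≠ 0 := by
          intro hβ0
          have hr2 := H.hr2
          rw [hα0, hβ0, hγ1, hβ0, hα0] at hr2
          simp at hr2
          have := H.hMi
          omega
        have hbpos : b ≠ 0 := by
          intro hb0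
          have := H.hβ
          rw [if_pos hb0] at this
          exact hβpos this
        have hx2 : x2 = 0 := by
          rcases h2 with ⟨hβz, _⟩ | hx2
          · exact absurd hβz hβpos
          · exact hx2
        rw [hx2, zero_pow (show k*β ≠ 0 from Nat.mul_ne_zero (by omega) hβpos)]
        ring
      · have hγe : k * (γ - β - α - 1) ≠ 0 := by
          have := H.hγ
          exact Nat.mul_ne_zero (by omega) (by omega)
        rw [zero_pow hγe]
        ring
    · rw [zero_pow (show k*α ≠ 0 from Nat.mul_ne_zero (by omega) hα0)]
      ring
  have hs2 : ∑ k ∈ Finset.Icc (M - m1 + 1) M,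
      (-1 : K) ^ k * (M.choose k : K) *
        ((0:K) ^ (a * (M - k)) * x2 ^ (b * (M - k)) * xp ^ (c * (M - k)) * xi ^ k *
          (0:K) ^ (k * (a + b + c - 1) - b * (M - m2) - a * (M - m1))) = 0 := by
    refine Finset.sum_eq_zero fun k hk => ?_
    simp only [Finset.mem_Icc] at hk
    by_cases hkM : k = M
    · subst hkM
      rw [H.A4, zero_pow (show mi - k ≠ 0 by have := H.hMi; omega)]
      ring
    · have hMk : M - k ≠ 0 := by omega
      rcases Nat.eq_zero_or_pos a with ha0 | hapos
      · rcases Nat.eq_zero_or_pos b with hb0 | hbpos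
        · have hc2 : 2 ≤ c := by
            by_contra hlt
            have hr1 := H.hr1
            have hMi := H.hMi
            rw [ha0, hb0] at hr1
            simp at hr1
            interval_cases c <;> omega
          have : k * (a + b + c - 1) - b*(M-m2) - a*(M-m1) ≠ 0 := by
            rw [ha0, hb0]
            simp only [Nat.zero_mul, Nat.sub_zero, Nat.zero_add]
            have hk1 : k ≠ 0 := by
              have h01 := H.h01
              have h1M := H.h1M
              omega
            exact Nat.mul_ne_zero hk1 (by omega)
          rw [zero_pow this]
          ring
        · have hx2 : x2 = 0 := by
            rcases h2 with ⟨_, hbz⟩ | hx2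
            · exact absurd hbz (by omega)
            · exact hx2
          rw [hx2, zero_pow (show b*(M-k) ≠ 0 from Nat.mul_ne_zero (by omega) hMk)]
          ring
      · rw [zero_pow (show a*(M-k) ≠ 0 from Nat.mul_ne_zero (by omega) hMk)]
        ring
  rw [hs1, hs2]
  ring


lemma exists_gcd_combo (s : Finset ℕ) (f : ℕ → ℕ) :
    ∃ e : ℕ → ℤ, ∑ j ∈ s, e j * (f j : ℤ) = ((Finset.gcd s f : ℕ) : ℤ) := by
  classical
  induction s using Finset.induction_on with
  | empty => exact ⟨0, by simp⟩
  | @insert a s ha ih =>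
    obtain ⟨e, he⟩ := ih
    refine ⟨fun j => if j = a then Nat.gcdA (f a) (Finset.gcd s f)
      else Nat.gcdB (f a) (Finset.gcd s f) * e j, ?_⟩
    rw [Finset.sum_insert ha, Finset.gcd_insert]
    beta_reduce
    rw [if_pos rfl]
    have h1 : ∑ j ∈ s, (if j = a then Nat.gcdA (f a) (Finset.gcd s f)
          else Nat.gcdB (f a) (Finset.gcd s f) * e j) * (f j : ℤ)
        = Nat.gcdB (f a) (Finset.gcd s f) * ∑ j ∈ s, e j * (f j : ℤ) := by
      rw [Finset.mul_sum]
      refine Finset.sum_congr rfl fun j hj => ?_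
      rw [if_neg (by rintro rfl; exact ha hj)]
      ring
    rw [h1, he]
    have hg := Nat.gcd_eq_gcd_ab (f a) (Finset.gcd s f)
    have : (gcd (f a) (Finset.gcd s f) : ℕ) = Nat.gcd (f a) (Finset.gcd s f) := rfl
    rw [this]
    rw [hg]
    ring


end STCI

namespace STCI

lemma eval_Fpoly {K : Type*} [CommRing K] (m : ℕ → ℕ) (i a b c α β γ : ℕ)
    (x : ℕ → K) :
    MvPolynomial.eval x (Fpoly K m i a b c α β γ)
      = S (m 1) (m 2) (m (i-1)) (m i) a b c α β γ (x 0) (x 1) (x 2) (x (i-1)) (x i) := by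
  simp only [Fpoly, S, map_add, map_sum, map_mul, map_pow, MvPolynomial.eval_X,
    MvPolynomial.eval_C]

end STCI

/-- Theorem 1 (the main theorem) of the paper, for the affine cone: over an
algebraically closed field, the common zero locus of
`F_1 = x_1^{m_2} - x_2^{m_1} x_0^{m_2-m_1}` and `F_2, …, F_{n-1}` is exactly the
affine cone `{(u^{m_n}, u^{m_n-m_1}v^{m_1}, …, u^{m_n-m_{n-1}}v^{m_{n-1}}, v^{m_n})}`
over the monomial curve `C(m_1, …, m_n)`; in particular `C(m_1, …, m_n) ⊆ ℙⁿ`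
is a set-theoretic complete intersection. -/
theorem stmt_12 {K : Type*} [Field K] [IsAlgClosed K] (n : ℕ) (hn : 3 ≤ n)
    (m a b c α β γ : ℕ → ℕ)
    (hpos : ∀ i, 1 ≤ i → i ≤ n → 0 < m i)
    (hmono : ∀ i, 1 ≤ i → i < n → m i < m (i + 1))
    (hgcd : Finset.gcd (Finset.Icc 1 n) m = 1)
    (hrep : ∀ i, 3 ≤ i → i ≤ n →
      m i = c i * m (i - 1) + b i * m 2 + a i * m 1 ∧
      m i + β i * m 2 + α i * m 1 = γ i * m (i - 1) ∧
      a i < m (i - 1) ∧ b i < m (i - 1) ∧ α i < m (i - 1) ∧ β i < m (i - 1) ∧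
      β i + α i + 1 ≤ γ i ∧ β i * (m 2 - m 1) ≤ m 1 ∧
      α i = (if a i = 0 then 0 else m (i - 1) - a i) ∧
      β i = (if b i = 0 then 0 else m (i - 1) - b i))
    (hb3 : b 3 = 0) (hβ3 : β 3 = 0) :
    ∀ x : ℕ → K,
      (x 1 ^ m 2 - x 2 ^ m 1 * x 0 ^ (m 2 - m 1) = 0 ∧
        ∀ i, 3 ≤ i → i ≤ n →
          MvPolynomial.eval x
            (Fpoly K m i (a i) (b i) (c i) (α i) (β i) (γ i)) = 0) ↔
      ∃ u v : K, x 0 = u ^ m n ∧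
        ∀ j, 1 ≤ j → j ≤ n → x j = u ^ (m n - m j) * v ^ m j := by
  intro x
  have hm1 : 0 < m 1 := hpos 1 le_rfl (by omega)
  have hmn0 : 0 < m n := hpos n (by omega) le_rfl
  have hmle : ∀ j l, 1 ≤ j → j ≤ l → l ≤ n → m j ≤ m l := by
    have key : ∀ d j, 1 ≤ j → j + d ≤ n → m j ≤ m (j + d) := by
      intro d
      induction d with
      | zero => intro j _ _; exact le_rfl
      | succ d ih =>
        intro j hj hjd
        have h1 := ih j hj (by omega)
        have h2 := hmono (j + d) (by omega) (by omega)
        exact le_trans h1 (le_of_lt h2)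
    intro j l hj hjl hln
    have := key (l - j) j hj (by omega)
    rwa [show j + (l - j) = l by omega] at this
  have hmlt : ∀ j l, 1 ≤ j → j < l → l ≤ n → m j < m l := by
    intro j l hj hjl hln
    have h2 : m (l-1) < m l := by
      have := hmono (l-1) (by omega) (by omega)
      rwa [show l-1+1 = l by omega] at this
    have h1 : m j ≤ m (l-1) := hmle j (l-1) hj (by omega) (by omega)
    omega
  have h12 : m 1 < m 2 := hmono 1 le_rfl (by omega)
  have hH : ∀ i, 3 ≤ i → i ≤ n → STCI.Hyp (m 1) (m 2) (m (i-1)) (m i)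
      (a i) (b i) (c i) (α i) (β i) (γ i) := by
    intro i h3 hn'
    obtain ⟨r1, r2, r3, r4, r5, r6, r7, r8, r9, r10⟩ := hrep i h3 hn'
    refine ⟨hm1, h12, hmle 2 (i-1) (by omega) (by omega) (by omega),
      ?_, r1, r2, r3, r4, r7, r8, r9, r10⟩
    have := hmono (i-1) (by omega) (by omega)
    rwa [show i-1+1 = i by omega] at this
  constructor
  · rintro ⟨hF1, hFi⟩
    by_cases hx0 : x 0 = 0
    · -- x0 = 0 case
      have hx1 : x 1 = 0 := by
        have h' : x 1 ^ m 2 = x 2 ^ m 1 * x 0 ^ (m 2 - m 1) := sub_eq_zero.mp hF1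
        rw [hx0, zero_pow (show m 2 - m 1 ≠ 0 by omega), mul_zero] at h'
        exact pow_eq_zero_iff (show m 2 ≠ 0 by omega) |>.mp h'
      have hchain : ∀ i, 2 ≤ i → i ≤ n - 1 → x i = 0 := by
        intro i
        induction i using Nat.strong_induction_on with
        | _ i ih =>
          intro h2 hin
          have H := hH (i+1) (by omega) (by omega)
          have heval := hFi (i+1) (by omega) (by omega)
          rw [STCI.eval_Fpoly] at heval
          simp only [Nat.add_sub_cancel] at heval H
          have hdis : (β (i+1) = 0 ∧ b (i+1) = 0) ∨ x 2 = 0 := by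
            rcases Nat.lt_or_ge i 3 with h | h
            · have hi2 : i = 2 := by omega
              subst hi2
              exact Or.inl ⟨hβ3, hb3⟩
            · exact Or.inr (ih 2 (by omega) (by omega) (by omega))
          rw [STCI.Hyp.SZ H (x 0) (x 1) (x 2) (x i) (x (i+1)) hx0 hx1 hdis] at heval
          exact pow_eq_zero_iff
            (show m (i+1) ≠ 0 by have := hpos (i+1) (by omega) (by omega); omega) |>.mp heval
      obtain ⟨v, hv⟩ := IsAlgClosed.exists_pow_nat_eq (x n) hmn0
      refine ⟨0, v, ?_, ?_⟩
      · rw [zero_pow (show m n ≠ 0 by omega)]; exact hx0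
      · intro j hj1 hjn
        rcases eq_or_lt_of_le hjn with rfl | hlt
        · rw [Nat.sub_self, pow_zero, one_mul]; exact hv.symm
        · have hj0 : x j = 0 := by
            rcases Nat.lt_or_ge j 2 with h | h
            · have hj1' : j = 1 := by omega
              rw [hj1']; exact hx1
            · exact hchain j h (by omega)
          rw [hj0, zero_pow (show m n - m j ≠ 0 by
            have := hmlt j n hj1 hlt le_rfl; omega), zero_mul]
    · -- x0 ≠ 0
      obtain ⟨u, hu⟩ := IsAlgClosed.exists_pow_nat_eq (x 0) hmn0
      have hu0 : u ≠ 0 := by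
        intro h; apply hx0; rw [← hu, h, zero_pow (show m n ≠ 0 by omega)]
      obtain ⟨y, hxy⟩ : ∃ y : ℕ → K, ∀ j, x j = x 0 * y j :=
        ⟨fun j => x j * (x 0)⁻¹, fun j => by field_simp⟩
      have hF1' : x 1 ^ m 2 = x 2 ^ m 1 * x 0 ^ (m 2 - m 1) := sub_eq_zero.mp hF1
      have hy12 : y 1 ^ m 2 = y 2 ^ m 1 := by
        have h' := hF1'
        rw [hxy 1, hxy 2, mul_pow, mul_pow] at h'
        have h'' : x 0 ^ m 2 * y 1 ^ m 2 = x 0 ^ m 2 * y 2 ^ m 1 := by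
          rw [h', show x 0 ^ m 1 * y 2 ^ m 1 * x 0 ^ (m 2 - m 1)
            = x 0 ^ (m 1 + (m 2 - m 1)) * y 2 ^ m 1 from by rw [pow_add]; ring,
            Nat.add_sub_cancel' (le_of_lt h12)]
        exact mul_left_cancel₀ (pow_ne_zero _ hx0) h''
      by_cases hy1 : y 1 = 0
      · -- zero chain
        have hx1 : x 1 = 0 := by rw [hxy 1, hy1, mul_zero]
        have hx2 : x 2 = 0 := by
          have h' := hF1'
          rw [hx1, zero_pow (show m 2 ≠ 0 by omega)] at h'
          rcases mul_eq_zero.mp h'.symm with h | h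
          · exact pow_eq_zero_iff (show m 1 ≠ 0 by omega) |>.mp h
          · exact absurd h (pow_ne_zero _ hx0)
        have hchain : ∀ i, 2 ≤ i → i ≤ n → x i = 0 := by
          intro i
          induction i using Nat.strong_induction_on with
          | _ i ih =>
            intro h2 hin
            rcases Nat.lt_or_ge i 3 with h | h
            · have hi2 : i = 2 := by omega
              rw [hi2]; exact hx2
            · have H := hH i (by omega) hin
              have heval := hFi i (by omega) hin
              rw [STCI.eval_Fpoly] at heval
              have hxp : x (i-1) = 0 := by
                rcases Nat.lt_or_ge (i-1) 3 with h' | h'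
                · have : i - 1 = 2 := by omega
                  rw [this]; exact hx2
                · exact ih (i-1) (by omega) (by omega) (by omega)
              rw [STCI.Hyp.SV H (x 0) (x 1) (x 2) (x (i-1)) (x i) hx1 hx2 hxp] at heval
              have hne1 : ((-1:K) ^ m (i-1)) ≠ 0 := pow_ne_zero _ (by norm_num)
              have hxiM : x i ^ m (i-1) = 0 := by
                rcases mul_eq_zero.mp heval with h' | h'
                · rcases mul_eq_zero.mp h' with h'' | h''
                  · exact absurd h'' hne1
                  · exact h''
                · exact absurd h' (pow_ne_zero _ hx0)
              exact pow_eq_zero_iff H.M0.ne' |>.mp hxiM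
        refine ⟨u, 0, hu.symm, ?_⟩
        intro j hj1 hjn
        rw [zero_pow (show m j ≠ 0 by have := hpos j hj1 hjn; omega), mul_zero]
        rcases Nat.lt_or_ge j 2 with h | h
        · have hj1' : j = 1 := by omega
          rw [hj1']; exact hx1
        · exact hchain j h hjn
      · -- main case
        have hy2 : y 2 ≠ 0 := by
          intro h
          apply hy1
          have h' : y 1 ^ m 2 = 0 := by
            rw [hy12, h, zero_pow (show m 1 ≠ 0 by omega)]
          exact pow_eq_zero_iff (show m 2 ≠ 0 by omega) |>.mp h'
        have Inv : ∀ i, 2 ≤ i → i ≤ n → ∀ j l, 1 ≤ j → j ≤ i → 1 ≤ l → l ≤ i →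
            y j ≠ 0 ∧ y j ^ m l = y l ^ m j := by
          intro i
          induction i using Nat.strong_induction_on with
          | _ i ih =>
            intro h2 hin
            rcases Nat.lt_or_ge i 3 with hi3 | hi3
            · have hi2 : i = 2 := by omega
              subst hi2
              intro j l hj1 hji hl1 hli
              interval_cases j <;> interval_cases l
              · exact ⟨hy1, rfl⟩
              · exact ⟨hy1, hy12⟩
              · exact ⟨hy2, hy12.symm⟩
              · exact ⟨hy2, rfl⟩
            · have IH := ih (i-1) (by omega) (by omega) (by omega)
              have H := hH i (by omega) hin
              have hyp0 : y (i-1) ≠ 0 := (IH (i-1) (i-1) (by omega) le_rfl (by omega) le_rfl).1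
              have rel1 : y 1 ^ m (i-1) = y (i-1) ^ m 1 :=
                (IH 1 (i-1) le_rfl (by omega) (by omega) le_rfl).2
              have rel2 : y 2 ^ m (i-1) = y (i-1) ^ m 2 :=
                (IH 2 (i-1) (by omega) (by omega) (by omega) le_rfl).2
              have heval := hFi i (by omega) hin
              rw [STCI.eval_Fpoly] at heval
              rw [hxy 1, hxy 2, hxy (i-1), hxy i] at heval
              rw [STCI.Hyp.SL H (x 0) (y 1) (y 2) (y (i-1)) (y i)
                hx0 hy1 hy2 hyp0 rel1 rel2] at heval
              have hR1 : y 1 ^ α i * y 2 ^ β i * y i * (y (i-1) ^ γ i)⁻¹ = 1 := by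
                have h1' : (1 - y 1 ^ α i * y 2 ^ β i * y i * (y (i-1) ^ γ i)⁻¹) ^ m (i-1) = 0 := by
                  rcases mul_eq_zero.mp heval with h' | h'
                  · exfalso
                    rcases mul_eq_zero.mp h' with h'' | h''
                    · exact pow_ne_zero _ hx0 h''
                    · exact pow_ne_zero _ hyp0 h''
                  · exact h'
                have h2' := pow_eq_zero_iff H.M0.ne' |>.mp h1'
                exact (sub_eq_zero.mp h2').symm
              have hprod : y 1 ^ α i * y 2 ^ β i * y i = y (i-1) ^ γ i :=
                (mul_inv_eq_one₀ (pow_ne_zero _ hyp0)).mp hR1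
              have hyi0 : y i ≠ 0 := by
                intro h
                rw [h, mul_zero] at hprod
                exact pow_ne_zero _ hyp0 hprod.symm
              have hnext : ∀ l, 1 ≤ l → l ≤ i - 1 → y i ^ m l = y l ^ m i := by
                intro l hl1 hli
                have g1 : y 1 ^ m l = y l ^ m 1 := (IH 1 l le_rfl (by omega) hl1 hli).2
                have g2 : y 2 ^ m l = y l ^ m 2 := (IH 2 l (by omega) (by omega) hl1 hli).2
                have gp : y (i-1) ^ m l = y l ^ m (i-1) := (IH (i-1) l (by omega) le_rfl hl1 hli).2
                have hl0 : y l ≠ 0 := (IH l l hl1 hli hl1 hli).1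
                have hq := congrArg (· ^ m l) hprod
                rw [mul_pow, mul_pow, ← pow_mul, ← pow_mul, ← pow_mul] at hq
                have e1 : y 1 ^ (α i * m l) = y l ^ (m 1 * α i) := by
                  rw [Nat.mul_comm (α i) (m l), pow_mul, g1, ← pow_mul, Nat.mul_comm]
                have e2 : y 2 ^ (β i * m l) = y l ^ (m 2 * β i) := by
                  rw [Nat.mul_comm (β i) (m l), pow_mul, g2, ← pow_mul, Nat.mul_comm]
                have ep : y (i-1) ^ (γ i * m l) = y l ^ (m (i-1) * γ i) := by
                  rw [Nat.mul_comm (γ i) (m l), pow_mul, gp, ← pow_mul, Nat.mul_comm]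
                rw [e1, e2, ep] at hq
                have hexp : m (i-1) * γ i = m i + (m 1 * α i + m 2 * β i) := by
                  have hh := H.hr2
                  zify at hh ⊢
                  linarith
                rw [hexp, pow_add] at hq
                have h' : y l ^ (m 1 * α i + m 2 * β i) * y i ^ m l
                    = y l ^ (m 1 * α i + m 2 * β i) * y l ^ m i := by
                  rw [pow_add] at hq ⊢
                  linear_combination hq
                exact mul_left_cancel₀ (pow_ne_zero _ hl0) h'
              intro j l hj1 hji hl1 hli
              by_cases hji' : j = i <;> by_cases hli' : l = i
              · subst hji'; subst hli'; exact ⟨hyi0, rfl⟩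
              · subst hji'
                exact ⟨hyi0, hnext l hl1 (by omega)⟩
              · subst hli'
                exact ⟨(IH j j hj1 (by omega) hj1 (by omega)).1, (hnext j hj1 (by omega)).symm⟩
              · exact IH j l hj1 (by omega) hl1 (by omega)
        obtain ⟨e, he⟩ := STCI.exists_gcd_combo (Finset.Icc 1 n) m
        rw [hgcd] at he
        have he1 : ∑ j ∈ Finset.Icc 1 n, e j * (m j : ℤ) = 1 := by exact_mod_cast he
        have hyne : ∀ j, 1 ≤ j → j ≤ n → y j ≠ 0 :=
          fun j h1 h2 => (Inv n (by omega) le_rfl j j h1 h2 h1 h2).1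
        have hrel : ∀ j l, 1 ≤ j → j ≤ n → 1 ≤ l → l ≤ n → y j ^ m l = y l ^ m j :=
          fun j l h1 h2 h3 h4 => (Inv n (by omega) le_rfl j l h1 h2 h3 h4).2
        set t : K := ∏ j ∈ Finset.Icc 1 n, (y j) ^ (e j) with htdef
        have htl : ∀ l, 1 ≤ l → l ≤ n → t ^ m l = y l := by
          intro l hl1 hln
          have hyl0 : y l ≠ 0 := hyne l hl1 hln
          rw [htdef, ← Finset.prod_pow]
          have hcongr : ∀ j ∈ Finset.Icc 1 n,
              ((y j) ^ (e j)) ^ (m l) = (y l) ^ ((m j : ℤ) * e j) := by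
            intro j hj
            simp only [Finset.mem_Icc] at hj
            rw [← zpow_natCast ((y j)^(e j)) (m l), ← zpow_mul,
              mul_comm (e j) ((m l : ℕ):ℤ), zpow_mul, zpow_natCast,
              hrel j l hj.1 hj.2 hl1 hln,
              ← zpow_natCast (y l) (m j), ← zpow_mul]
          rw [Finset.prod_congr rfl hcongr]
          have hprodz : ∀ (s : Finset ℕ),
              ∏ j ∈ s, (y l) ^ ((m j:ℤ) * e j) = (y l) ^ (∑ j ∈ s, (m j:ℤ) * e j) := by
            intro s
            induction s using Finset.induction_on with
            | empty => simp
            | @insert p s hp ihs =>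
              rw [Finset.prod_insert hp, Finset.sum_insert hp, zpow_add₀ hyl0, ihs]
          rw [hprodz]
          rw [show (∑ j ∈ Finset.Icc 1 n, ((m j:ℤ) * e j)) = 1 from by
            rw [← he1]; exact Finset.sum_congr rfl fun j _ => mul_comm _ _]
          exact zpow_one _
        refine ⟨u, t * u, hu.symm, ?_⟩
        intro j hj1 hjn
        rw [hxy j, ← hu, ← htl j hj1 hjn, mul_pow,
          show u ^ (m n - m j) * (t ^ m j * u ^ m j)
            = (u ^ (m n - m j) * u ^ m j) * t ^ m j from by ring,
          ← pow_add, Nat.sub_add_cancel (hmle j n hj1 hjn le_rfl)]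
  · rintro ⟨u, v, hu, hj⟩
    constructor
    · -- F1 vanishes
      have hx1 := hj 1 (by omega) (by omega)
      have hx2 := hj 2 (by omega) (by omega)
      rw [hx1, hx2, hu]
      by_cases hu0 : u = 0
      · subst hu0
        rw [zero_pow (show m n - m 1 ≠ 0 by
            have := hmlt 1 n le_rfl (by omega) le_rfl; omega),
          zero_pow (show m n - m 2 ≠ 0 by
            have := hmlt 2 n (by omega) (by omega) le_rfl; omega),
          zero_mul, zero_mul, zero_pow (show m 2 ≠ 0 by omega),
          zero_pow (show m 1 ≠ 0 by omega), zero_mul, sub_zero]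
      · have hexp : (m n - m 1) * m 2 = (m n - m 2) * m 1 + m n * (m 2 - m 1) := by
          zify [hmle 1 n le_rfl (by omega) le_rfl, hmle 2 n (by omega) (by omega) le_rfl,
            le_of_lt h12]
          ring
        rw [mul_pow, mul_pow, ← pow_mul, ← pow_mul, ← pow_mul, ← pow_mul, ← pow_mul,
          hexp, pow_add, show m 1 * m 2 = m 2 * m 1 from Nat.mul_comm _ _]
        ring
    · intro i h3 hin
      have H := hH i h3 hin
      rw [STCI.eval_Fpoly]
      have hx1 := hj 1 (by omega) (by omega)
      have hx2 := hj 2 (by omega) (by omega)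
      have hxp := hj (i-1) (by omega) (by omega)
      by_cases hu0 : u = 0
      · subst hu0
        have e1 : x 1 = 0 := by
          rw [hx1, zero_pow (show m n - m 1 ≠ 0 by
            have := hmlt 1 n le_rfl (by omega) le_rfl; omega), zero_mul]
        have e2 : x 2 = 0 := by
          rw [hx2, zero_pow (show m n - m 2 ≠ 0 by
            have := hmlt 2 n (by omega) (by omega) le_rfl; omega), zero_mul]
        have ep : x (i-1) = 0 := by
          rw [hxp, zero_pow (show m n - m (i-1) ≠ 0 by
            have := hmlt (i-1) n (by omega) (by omega) le_rfl; omega), zero_mul]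
        rw [STCI.Hyp.SV H (x 0) (x 1) (x 2) (x (i-1)) (x i) e1 e2 ep,
          hu, zero_pow (show m n ≠ 0 by omega), STCI.Hyp.A4 H,
          zero_pow (show m i - m (i-1) ≠ 0 by have := H.hMi; omega), mul_zero]
      · by_cases hv0 : v = 0
        · subst hv0
          have hmj0 : ∀ j', 1 ≤ j' → j' ≤ n → x j' = 0 := by
            intro j' hj1 hjn
            rw [hj j' hj1 hjn, zero_pow (show m j' ≠ 0 by
              have := hpos j' hj1 hjn; omega), mul_zero]
          rw [STCI.Hyp.SV H (x 0) (x 1) (x 2) (x (i-1)) (x i)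
            (hmj0 1 (by omega) (by omega)) (hmj0 2 (by omega) (by omega))
            (hmj0 (i-1) (by omega) (by omega)),
            hmj0 i (by omega) hin, zero_pow H.M0.ne', mul_zero, zero_mul]
        · have htt0 : v * u⁻¹ ≠ 0 := mul_ne_zero hv0 (inv_ne_zero hu0)
          have hts : ∀ j', 1 ≤ j' → j' ≤ n → x j' = x 0 * (v * u⁻¹) ^ m j' := by
            intro j' hj1 hjn
            rw [hj j' hj1 hjn, hu, mul_pow, inv_pow,
              pow_sub₀ u hu0 (hmle j' n hj1 hjn le_rfl)]
            ring
          have hx0ne : x 0 ≠ 0 := by rw [hu]; exact pow_ne_zero _ hu0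
          rw [hts 1 (by omega) (by omega), hts 2 (by omega) (by omega),
            hts (i-1) (by omega) (by omega), hts i (by omega) hin]
          have relp1 : ((v * u⁻¹) ^ m 1) ^ m (i-1) = ((v * u⁻¹) ^ m (i-1)) ^ m 1 := by
            rw [← pow_mul, ← pow_mul, Nat.mul_comm]
          have relp2 : ((v * u⁻¹) ^ m 2) ^ m (i-1) = ((v * u⁻¹) ^ m (i-1)) ^ m 2 := by
            rw [← pow_mul, ← pow_mul, Nat.mul_comm]
          rw [STCI.Hyp.SL H (x 0) ((v * u⁻¹) ^ m 1) ((v * u⁻¹) ^ m 2)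
            ((v * u⁻¹) ^ m (i-1)) ((v * u⁻¹) ^ m i) hx0ne
            (pow_ne_zero _ htt0) (pow_ne_zero _ htt0) (pow_ne_zero _ htt0) relp1 relp2]
          have hRone : ((v * u⁻¹) ^ m 1) ^ α i * ((v * u⁻¹) ^ m 2) ^ β i * (v * u⁻¹) ^ m i
              * (((v * u⁻¹) ^ m (i-1)) ^ γ i)⁻¹ = 1 := by
            rw [← pow_mul, ← pow_mul, ← pow_mul, ← pow_add, ← pow_add,
              show m 1 * α i + m 2 * β i + m i = m (i-1) * γ i from by
                have hh := H.hr2; zify at hh ⊢; linarith]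
            exact mul_inv_cancel₀ (pow_ne_zero _ htt0)
          rw [hRone, sub_self, zero_pow H.M0.ne', mul_zero]
end

section
/- Let m_1 < m' be positive integers with gcd(m', m_1) = 1, and let m be a positive integer with m ≥ m'·m_1 and m ≥ m'·(m' − m_1). Then there exist nonnegative integers γ and α such that m = γ·m' − α·m_1, α < m', γ ≥ m_1, and γ − α − 1 ≥ 0. -/
/-- The arithmetic core of the proof of Proposition 1 of the paper: if
`gcd(m', m₁) = 1`, `m₁ < m'`, and `m ≥ m'·m₁`, `m ≥ m'·(m' - m₁)`, then
`m = γ·m' - α·m₁` (written additively) for some nonnegative integers `γ, α`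
with `α < m'`, `γ ≥ m₁` and `γ - α - 1 ≥ 0`. -/
theorem stmt_13 (m1 m' m : ℕ) (h1 : 0 < m1) (h1' : m1 < m')
    (hcop : Nat.Coprime m' m1) (hm : 0 < m)
    (hge1 : m' * m1 ≤ m) (hge2 : m' * (m' - m1) ≤ m) :
    ∃ γ α : ℕ, m + α * m1 = γ * m' ∧ α < m' ∧ m1 ≤ γ ∧ α + 1 ≤ γ := by
  haveI : NeZero m' := ⟨by omega⟩
  have hu : IsUnit (m1 : ZMod m') := (ZMod.isUnit_iff_coprime m1 m').mpr hcop.symm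
  set a : ZMod m' := -(m : ZMod m') * ((hu.unit⁻¹ : (ZMod m')ˣ) : ZMod m') with ha
  set α := a.val with hαdef
  have hα : α < m' := ZMod.val_lt a
  have hdvd : m' ∣ m + α * m1 := by
    have h0 : ((m + α * m1 : ℕ) : ZMod m') = 0 := by
      push_cast
      rw [hαdef, ZMod.natCast_val, ZMod.cast_id, ha, mul_assoc,
        IsUnit.val_inv_mul]
      ring
    exact (ZMod.natCast_eq_zero_iff _ _).mp h0
  set γ := (m + α * m1) / m' with hγdef
  have hγ : γ * m' = m + α * m1 := Nat.div_mul_cancel hdvd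
  refine ⟨γ, α, hγ.symm, hα, ?_, ?_⟩
  · have : m' * m1 ≤ m' * γ := by
      calc m' * m1 ≤ m := hge1
        _ ≤ m + α * m1 := by omega
        _ = γ * m' := hγ.symm
        _ = m' * γ := mul_comm _ _
    exact Nat.le_of_mul_le_mul_left this (by omega)
  · have key : α * (m' - m1) < m := by
      calc α * (m' - m1) ≤ (m' - 1) * (m' - m1) := by
            apply Nat.mul_le_mul_right; omega
        _ < m' * (m' - m1) :=
            Nat.mul_lt_mul_of_pos_right (by omega) (by omega)
        _ ≤ m := hge2
    have hsplit : α * m' = α * m1 + α * (m' - m1) := by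
      rw [← Nat.mul_add]; congr 1; omega
    have : α * m' < γ * m' := by omega
    have := Nat.lt_of_mul_lt_mul_right this
    omega
end
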